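/- arXiv:2505.04130 — 5 statements merged into one kernel-verified Lean document; each statement's English description precedes it below -/
import Mathlib

section
/- Let Γ be a countably infinite group with a fixed enumeration (γ_n)_{n∈ℕ}. For subsets A, B ⊆ Γ define recursively X_n^{A,B} = (A \ ⋃_{m<n} X_m^{A,B}) ∩ ((B \ ⋃_{m<n} X_m^{A,B}·γ_m)·γ_n^{-1}), and let φ^{A,B} be the map sending γ ∈ X_n^{A,B} to γ·γ_n. Let μ be an ergodic Γ-invariant Borel probability measure on 2^Γ × 2^Γ (diagonal left-translation action) such that μ-almost surely both coordinates A and B are infinite, and suppose μ({(A,B) : 1_Γ ∈ A}) = μ({(A,B) : 1_Γ ∈ B}). Then for μ-almost every pair (A, B), the map φ^{A,B} is a bijection from A onto B. -/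
open MeasureTheory

section DetAux

variable {Γ : Type*} [Group Γ]

lemma memImageMulRight {S : Set Γ} {c y : Γ} :
    y ∈ (fun x => x * c) '' S ↔ y * c⁻¹ ∈ S := by
  constructor
  · rintro ⟨x, hx, rfl⟩; simpa using hx
  · intro h; exact ⟨y * c⁻¹, h, by simp⟩

variable (g : ℕ → Γ) (Xn : ℕ → Set Γ → Set Γ → Set Γ)
variable (hXn : ∀ (n : ℕ) (A B : Set Γ), Xn n A B =
      (A \ ⋃ m < n, Xn m A B) ∩
        ((fun x => x * (g n)⁻¹) '' (B \ ⋃ m < n, (fun x => x * g m) '' Xn m A B)))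

include hXn

lemma memXnIff {n : ℕ} {A B : Set Γ} {x : Γ} : x ∈ Xn n A B ↔
    (x ∈ A ∧ ∀ m < n, x ∉ Xn m A B) ∧
    (x * g n ∈ B ∧ ∀ m < n, x * g n * (g m)⁻¹ ∉ Xn m A B) := by
  conv_lhs => rw [hXn]
  simp only [Set.mem_inter_iff, Set.mem_diff, Set.mem_iUnion, memImageMulRight, inv_inv,
    not_exists, exists_prop]
  tauto

lemma XnSubset {n : ℕ} {A B : Set Γ} {x : Γ} (h : x ∈ Xn n A B) : x ∈ A :=
  ((memXnIff g Xn hXn).mp h).1.1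

lemma XnMulMem {n : ℕ} {A B : Set Γ} {x : Γ} (h : x ∈ Xn n A B) : x * g n ∈ B :=
  ((memXnIff g Xn hXn).mp h).2.1

lemma XnUnique {m n : ℕ} {A B : Set Γ} {x : Γ}
    (hm : x ∈ Xn m A B) (hn : x ∈ Xn n A B) : m = n := by
  rcases lt_trichotomy m n with h | h | h
  · exact absurd hm (((memXnIff g Xn hXn).mp hn).1.2 m h)
  · exact h
  · exact absurd hn (((memXnIff g Xn hXn).mp hm).1.2 n h)

lemma XnImgUnique {m n : ℕ} {A B : Set Γ} {x y : Γ}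
    (hm : x ∈ Xn m A B) (hn : y ∈ Xn n A B) (hxy : x * g m = y * g n) :
    m = n ∧ x = y := by
  rcases lt_trichotomy m n with h | h | h
  · exfalso
    have := ((memXnIff g Xn hXn).mp hn).2.2 m h
    apply this
    have : y * g n * (g m)⁻¹ = x := by rw [← hxy]; simp
    rwa [this]
  · refine ⟨h, ?_⟩
    subst h
    exact mul_right_cancel hxy
  · exfalso
    have := ((memXnIff g Xn hXn).mp hm).2.2 n h
    apply this
    have : x * g m * (g n)⁻¹ = y := by rw [hxy]; simp
    rwa [this]

lemma XnDichotomy (hgs : Function.Surjective g) (A B : Set Γ) :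
    (∀ a ∈ A, ∃ n, a ∈ Xn n A B) ∨ (∀ b ∈ B, ∃ n, b * (g n)⁻¹ ∈ Xn n A B) := by
  by_contra hc
  push_neg at hc
  obtain ⟨⟨a, ha, hna⟩, ⟨b, hb, hnb⟩⟩ := hc
  obtain ⟨n, hn⟩ := hgs (a⁻¹ * b)
  apply hna n
  rw [memXnIff g Xn hXn]
  have hab : a * g n = b := by rw [hn]; simp
  refine ⟨⟨ha, fun m _ => hna m⟩, ⟨by rwa [hab], fun m _ => by rw [hab]; exact hnb m⟩⟩

lemma XnEquivariant : ∀ (n : ℕ) (A B : Set Γ) (γ x : Γ),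
    x ∈ Xn n {a | γ⁻¹ * a ∈ A} {b | γ⁻¹ * b ∈ B} ↔ γ⁻¹ * x ∈ Xn n A B := by
  intro n
  induction n using Nat.strong_induction_on with
  | _ n ih =>
    intro A B γ x
    rw [memXnIff g Xn hXn, memXnIff g Xn hXn]
    constructor
    · rintro ⟨⟨h1, h2⟩, h3, h4⟩
      refine ⟨⟨h1, fun m hm hmem => h2 m hm (((ih m hm A B γ x)).mpr hmem)⟩, ?_, ?_⟩
      · have : γ⁻¹ * (x * g n) ∈ B := h3
        rwa [← mul_assoc] at this
      · intro m hm hmem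
        apply h4 m hm
        rw [ih m hm A B γ (x * g n * (g m)⁻¹)]
        have : γ⁻¹ * (x * g n * (g m)⁻¹) = γ⁻¹ * x * g n * (g m)⁻¹ := by group
        rwa [this]
    · rintro ⟨⟨h1, h2⟩, h3, h4⟩
      refine ⟨⟨h1, fun m hm hmem => h2 m hm (((ih m hm A B γ x)).mp hmem)⟩, ?_, ?_⟩
      · show γ⁻¹ * (x * g n) ∈ B
        rwa [← mul_assoc]
      · intro m hm hmem
        apply h4 m hm
        have h5 := (ih m hm A B γ (x * g n * (g m)⁻¹)).mp hmem
        have : γ⁻¹ * (x * g n * (g m)⁻¹) = γ⁻¹ * x * g n * (g m)⁻¹ := by group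
        rwa [this] at h5

end DetAux

/-- For an ergodic invariant probability measure `μ` on `2^Γ × 2^Γ` with
almost surely infinite coordinates and equal density of the identity in both coordinates,
the canonically defined map `φ^{A,B}` (sending `γ ∈ X_n^{A,B}` to `γ·γ_n`) is almost
surely a bijection from `A` onto `B`. -/
theorem stmt_3 {Γ : Type*} [Group Γ] [Countable Γ] [Infinite Γ]
    (g : ℕ → Γ) (hg : Function.Bijective g)
    (Xn : ℕ → Set Γ → Set Γ → Set Γ)
    (hXn : ∀ (n : ℕ) (A B : Set Γ), Xn n A B =
      (A \ ⋃ m < n, Xn m A B) ∩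
        ((fun x => x * (g n)⁻¹) '' (B \ ⋃ m < n, (fun x => x * g m) '' Xn m A B)))
    (μ : Measure ((Γ → Bool) × (Γ → Bool)))
    [IsProbabilityMeasure μ]
    (hinv : ∀ γ : Γ, Measure.map
      (fun p : (Γ → Bool) × (Γ → Bool) =>
        ((fun a => p.1 (γ⁻¹ * a)), fun b => p.2 (γ⁻¹ * b))) μ = μ)
    (herg : ∀ s : Set ((Γ → Bool) × (Γ → Bool)), MeasurableSet s →
      (∀ γ : Γ, (fun p : (Γ → Bool) × (Γ → Bool) =>
        ((fun a => p.1 (γ⁻¹ * a)), fun b => p.2 (γ⁻¹ * b))) ⁻¹' s = s) →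
      μ s = 0 ∨ μ s = 1)
    (hinf : ∀ᵐ p ∂μ, {a : Γ | p.1 a = true}.Infinite ∧ {b : Γ | p.2 b = true}.Infinite)
    (heq : μ {p | p.1 1 = true} = μ {p | p.2 1 = true}) :
    ∀ᵐ p ∂μ, ∃ φ : Γ → Γ,
      (∀ n, ∀ x ∈ Xn n {a : Γ | p.1 a = true} {b : Γ | p.2 b = true}, φ x = x * g n) ∧
      (⋃ n, Xn n {a : Γ | p.1 a = true} {b : Γ | p.2 b = true}) = {a : Γ | p.1 a = true} ∧
      Set.BijOn φ {a : Γ | p.1 a = true} {b : Γ | p.2 b = true} := by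
  classical
  -- notation
  set Ω := (Γ → Bool) × (Γ → Bool) with hΩ
  set T : Γ → Ω → Ω := fun γ p => ((fun a => p.1 (γ⁻¹ * a)), fun b => p.2 (γ⁻¹ * b)) with hT
  have hTmeas : ∀ γ, Measurable (T γ) := by
    intro γ
    apply Measurable.prod
    · exact measurable_pi_lambda _ (fun a => (measurable_pi_apply (γ⁻¹ * a)).comp measurable_fst)
    · exact measurable_pi_lambda _ (fun b => (measurable_pi_apply (γ⁻¹ * b)).comp measurable_snd)
  set Ap : Ω → Set Γ := fun p => {a | p.1 a = true} with hAp
  set Bp : Ω → Set Γ := fun p => {b | p.2 b = true} with hBp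
  -- key measurable sets
  set S : ℕ → Γ → Set Ω := fun n γ => {p | γ ∈ Xn n (Ap p) (Bp p)} with hS
  have hSmeas : ∀ n, ∀ γ : Γ, MeasurableSet (S n γ) := by
    intro n
    induction n using Nat.strong_induction_on with
    | _ n ih =>
      intro γ
      have hrepr : S n γ = (((fun p : Ω => p.1 γ) ⁻¹' {true}) ∩
            ⋂ m ∈ Finset.range n, (S m γ)ᶜ) ∩
          (((fun p : Ω => p.2 (γ * g n)) ⁻¹' {true}) ∩
            ⋂ m ∈ Finset.range n, (S m (γ * g n * (g m)⁻¹))ᶜ) := by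
        ext p
        show γ ∈ Xn n (Ap p) (Bp p) ↔ _
        rw [memXnIff g Xn hXn]
        simp only [Set.mem_inter_iff, Set.mem_preimage, Set.mem_singleton_iff,
          Set.mem_iInter, Set.mem_compl_iff, Finset.mem_range]
        exact Iff.rfl
      rw [hrepr]
      refine MeasurableSet.inter (MeasurableSet.inter ?_ ?_) (MeasurableSet.inter ?_ ?_)
      · exact ((measurable_pi_apply γ).comp measurable_fst) (measurableSet_singleton true)
      · exact MeasurableSet.biInter (Set.to_countable _)
          (fun m hm => (ih m (Finset.mem_range.mp hm) γ).compl)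
      · exact ((measurable_pi_apply (γ * g n)).comp measurable_snd) (measurableSet_singleton true)
      · exact MeasurableSet.biInter (Set.to_countable _)
          (fun m hm => (ih m (Finset.mem_range.mp hm) _).compl)
  -- shift of coordinates
  have hApT : ∀ γ (p : Ω) (x : Γ), x ∈ Ap (T γ p) ↔ γ⁻¹ * x ∈ Ap p := fun _ _ _ => Iff.rfl
  have hpreS : ∀ (γ δ : Γ) (n : ℕ), T γ ⁻¹' (S n δ) = S n (γ⁻¹ * δ) := by
    intro γ δ n
    ext p
    simp only [Set.mem_preimage, hS, Set.mem_setOf_eq]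
    have h1 : Ap (T γ p) = {a | γ⁻¹ * a ∈ Ap p} := rfl
    have h2 : Bp (T γ p) = {b | γ⁻¹ * b ∈ Bp p} := rfl
    rw [h1, h2]
    exact XnEquivariant g Xn hXn n (Ap p) (Bp p) γ δ
  have hμpre : ∀ (γ : Γ) (s : Set Ω), MeasurableSet s → μ (T γ ⁻¹' s) = μ s := by
    intro γ s hs
    conv_rhs => rw [← hinv γ]
    rw [Measure.map_apply (hTmeas γ) hs]
  have hμS : ∀ (n : ℕ) (δ : Γ), μ (S n δ) = μ (S n 1) := by
    intro n δ
    have := hμpre δ (S n δ) (hSmeas n δ)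
    rw [hpreS δ δ n, inv_mul_cancel] at this
    exact this.symm
  -- unmatched sets
  set UA : Γ → Set Ω := fun γ => {p | p.1 γ = true} ∩ ⋂ n, (S n γ)ᶜ with hUA
  set UB : Γ → Set Ω := fun γ => {p | p.2 γ = true} ∩ ⋂ n, (S n (γ * (g n)⁻¹))ᶜ with hUB
  have hm1 : ∀ γ : Γ, MeasurableSet {p : Ω | p.1 γ = true} := by
    intro γ
    have : {p : Ω | p.1 γ = true} = (fun p : Ω => p.1 γ) ⁻¹' {true} := rfl
    rw [this]
    exact ((measurable_pi_apply γ).comp measurable_fst) (measurableSet_singleton true)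
  have hm2 : ∀ γ : Γ, MeasurableSet {p : Ω | p.2 γ = true} := by
    intro γ
    have : {p : Ω | p.2 γ = true} = (fun p : Ω => p.2 γ) ⁻¹' {true} := rfl
    rw [this]
    exact ((measurable_pi_apply γ).comp measurable_snd) (measurableSet_singleton true)
  have hUAmeas : ∀ γ, MeasurableSet (UA γ) :=
    fun γ => (hm1 γ).inter (MeasurableSet.iInter fun n => (hSmeas n γ).compl)
  have hUBmeas : ∀ γ, MeasurableSet (UB γ) :=
    fun γ => (hm2 γ).inter (MeasurableSet.iInter fun n => (hSmeas n _).compl)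
  have hmemS : ∀ (γ δ : Γ) (n : ℕ) (p : Ω), T γ p ∈ S n δ ↔ p ∈ S n (γ⁻¹ * δ) := by
    intro γ δ n p
    rw [← hpreS γ δ n]
    exact Iff.rfl
  have hpreUA : ∀ γ δ, T γ ⁻¹' (UA δ) = UA (γ⁻¹ * δ) := by
    intro γ δ
    ext p
    rw [Set.mem_preimage, hUA]
    simp only [Set.mem_inter_iff, Set.mem_setOf_eq, Set.mem_iInter, Set.mem_compl_iff]
    have hfst : (T γ p).1 δ = p.1 (γ⁻¹ * δ) := rfl
    rw [hfst]
    exact and_congr Iff.rfl (forall_congr' fun n => not_congr (hmemS γ δ n p))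
  have hpreUB : ∀ γ δ, T γ ⁻¹' (UB δ) = UB (γ⁻¹ * δ) := by
    intro γ δ
    ext p
    rw [Set.mem_preimage, hUB]
    simp only [Set.mem_inter_iff, Set.mem_setOf_eq, Set.mem_iInter, Set.mem_compl_iff]
    have hsnd : (T γ p).2 δ = p.2 (γ⁻¹ * δ) := rfl
    rw [hsnd]
    refine and_congr Iff.rfl (forall_congr' fun n => not_congr ?_)
    rw [hmemS γ (δ * (g n)⁻¹) n p, mul_assoc]
  have hμUA : ∀ δ, μ (UA δ) = μ (UA 1) := by
    intro δ
    have := hμpre δ (UA δ) (hUAmeas δ)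
    rw [hpreUA δ δ, inv_mul_cancel] at this
    exact this.symm
  have hμUB : ∀ δ, μ (UB δ) = μ (UB 1) := by
    intro δ
    have := hμpre δ (UB δ) (hUBmeas δ)
    rw [hpreUB δ δ, inv_mul_cancel] at this
    exact this.symm
  -- disjointness facts
  have hSdisjoint : Pairwise (Function.onFun Disjoint (fun n => S n 1)) := by
    intro m n hmn
    rw [Function.onFun, Set.disjoint_left]
    intro p hm hn
    exact hmn (XnUnique g Xn hXn hm hn)
  have hVdisjoint : Pairwise (Function.onFun Disjoint (fun n => S n ((g n)⁻¹))) := by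
    intro m n hmn
    rw [Function.onFun, Set.disjoint_left]
    intro p hm hn
    refine hmn (XnImgUnique g Xn hXn hm hn (by simp)).1
  -- density decompositions
  have hdecA : {p : Ω | p.1 1 = true} = UA 1 ∪ ⋃ n, S n 1 := by
    ext p
    simp only [Set.mem_setOf_eq, Set.mem_union, hUA, Set.mem_inter_iff, Set.mem_iInter,
      Set.mem_compl_iff, Set.mem_iUnion]
    constructor
    · intro h
      by_cases hc : ∃ n, p ∈ S n 1
      · exact Or.inr hc
      · push_neg at hc; exact Or.inl ⟨h, hc⟩
    · rintro (⟨h, -⟩ | ⟨n, hn⟩)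
      · exact h
      · exact XnSubset g Xn hXn hn
  have hdecB : {p : Ω | p.2 1 = true} = UB 1 ∪ ⋃ n, S n ((g n)⁻¹) := by
    ext p
    simp only [Set.mem_setOf_eq, Set.mem_union, hUB, Set.mem_inter_iff, Set.mem_iInter,
      Set.mem_compl_iff, Set.mem_iUnion, one_mul]
    constructor
    · intro h
      by_cases hc : ∃ n, p ∈ S n ((g n)⁻¹)
      · exact Or.inr hc
      · push_neg at hc; exact Or.inl ⟨h, hc⟩
    · rintro (⟨h, -⟩ | ⟨n, hn⟩)
      · exact h
      · have := XnMulMem g Xn hXn hn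
        rwa [inv_mul_cancel] at this
  have hdisjA : Disjoint (UA 1) (⋃ n, S n 1) := by
    rw [Set.disjoint_left]
    rintro p ⟨_, hp2⟩ hp3
    rw [Set.mem_iUnion] at hp3
    obtain ⟨n, hn⟩ := hp3
    exact (Set.mem_iInter.mp hp2 n) hn
  have hdisjB : Disjoint (UB 1) (⋃ n, S n ((g n)⁻¹)) := by
    rw [Set.disjoint_left]
    rintro p ⟨_, hp2⟩ hp3
    rw [Set.mem_iUnion] at hp3
    obtain ⟨n, hn⟩ := hp3
    have := Set.mem_iInter.mp hp2 n
    rw [one_mul] at this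
    exact this hn
  have hmA : μ {p : Ω | p.1 1 = true} = μ (UA 1) + ∑' n, μ (S n 1) := by
    rw [hdecA, measure_union hdisjA (MeasurableSet.iUnion (fun n => hSmeas n 1)),
      measure_iUnion hSdisjoint (fun n => hSmeas n 1)]
  have hmB : μ {p : Ω | p.2 1 = true} = μ (UB 1) + ∑' n, μ (S n 1) := by
    rw [hdecB, measure_union hdisjB (MeasurableSet.iUnion (fun n => hSmeas n _)),
      measure_iUnion hVdisjoint (fun n => hSmeas n _)]
    congr 1
    exact tsum_congr fun n => hμS n _
  have htne : (∑' n, μ (S n 1)) ≠ ⊤ := by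
    rw [← measure_iUnion hSdisjoint (fun n => hSmeas n 1)]
    exact measure_ne_top μ _
  have hUAB : μ (UA 1) = μ (UB 1) := by
    have h := hmA.symm.trans (heq.trans hmB)
    rw [add_comm (μ (UA 1)), add_comm (μ (UB 1))] at h
    exact (ENNReal.add_right_inj htne).mp h
  -- invariant events
  set EA : Set Ω := ⋃ γ : Γ, UA γ with hEA
  set EB : Set Ω := ⋃ γ : Γ, UB γ with hEB
  have hEAmeas : MeasurableSet EA := MeasurableSet.iUnion hUAmeas
  have hEAinv : ∀ γ : Γ, T γ ⁻¹' EA = EA := by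
    intro γ
    rw [hEA, Set.preimage_iUnion]
    ext p
    simp only [Set.mem_iUnion]
    constructor
    · rintro ⟨δ, hδ⟩; rw [hpreUA] at hδ; exact ⟨γ⁻¹ * δ, hδ⟩
    · rintro ⟨δ, hδ⟩; exact ⟨γ * δ, by rw [hpreUA]; simpa using hδ⟩
  -- dichotomy: EA ∩ EB = ∅
  have hdich : EA ∩ EB = ∅ := by
    ext p
    simp only [Set.mem_inter_iff, Set.mem_empty_iff_false, iff_false, not_and]
    intro hA hB
    rw [hEA, Set.mem_iUnion] at hA
    obtain ⟨a, ha⟩ := hA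
    rw [hEB, Set.mem_iUnion] at hB
    obtain ⟨b, hb⟩ := hB
    simp only [hUA, Set.mem_inter_iff, Set.mem_setOf_eq, Set.mem_iInter,
      Set.mem_compl_iff] at ha
    simp only [hUB, Set.mem_inter_iff, Set.mem_setOf_eq, Set.mem_iInter,
      Set.mem_compl_iff] at hb
    rcases XnDichotomy g Xn hXn hg.2 (Ap p) (Bp p) with h | h
    · obtain ⟨n, hn⟩ := h a ha.1
      exact ha.2 n hn
    · obtain ⟨n, hn⟩ := h b hb.1
      exact hb.2 n hn
  -- both unmatched events are null
  have hEB_of_UB1 : μ (UB 1) = 0 → μ EB = 0 := by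
    intro h
    rw [hEB]
    refine measure_iUnion_null fun γ => ?_
    rw [hμUB γ]; exact h
  have hEA_of_UA1 : μ (UA 1) = 0 → μ EA = 0 := by
    intro h
    rw [hEA]
    refine measure_iUnion_null fun γ => ?_
    rw [hμUA γ]; exact h
  have hEA0 : μ EA = 0 := by
    rcases herg EA hEAmeas hEAinv with h | h
    · exact h
    · exfalso
      have hEB0 : μ EB = 0 := by
        have hsub : EB ⊆ EAᶜ := by
          intro p hp
          intro hpa
          have : p ∈ EA ∩ EB := ⟨hpa, hp⟩
          rw [hdich] at this
          exact this
        refine measure_mono_null hsub ?_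
        rw [measure_compl hEAmeas (measure_ne_top μ _), h, measure_univ]
        simp
      have hub : μ (UB 1) = 0 := measure_mono_null (Set.subset_iUnion UB 1) hEB0
      have hua : μ (UA 1) = 0 := by rw [hUAB]; exact hub
      have := hEA_of_UA1 hua
      rw [this] at h
      exact zero_ne_one h
  have hEB0 : μ EB = 0 := by
    apply hEB_of_UB1
    rw [← hUAB]
    exact measure_mono_null (Set.subset_iUnion UA 1) hEA0
  -- conclude a.e.
  have hae : ∀ᵐ p ∂μ, p ∉ EA ∪ EB := by
    rw [ae_iff]
    simp only [not_not]
    refine measure_mono_null (fun p hp => hp) (measure_union_null hEA0 hEB0)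
  filter_upwards [hae] with p hp
  rw [Set.mem_setOf_eq, Set.mem_union] at hp
  push_neg at hp
  obtain ⟨hpa, hpb⟩ := hp
  simp only [hEA, hEB, Set.mem_iUnion, not_exists] at hpa hpb
  -- all points matched
  have hAfull : ∀ a ∈ Ap p, ∃ n, a ∈ Xn n (Ap p) (Bp p) := by
    intro a ha
    by_contra hc
    push_neg at hc
    exact hpa a ⟨ha, Set.mem_iInter.mpr fun n => hc n⟩
  have hBfull : ∀ b ∈ Bp p, ∃ n, b * (g n)⁻¹ ∈ Xn n (Ap p) (Bp p) := by
    intro b hb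
    by_contra hc
    push_neg at hc
    exact hpb b ⟨hb, Set.mem_iInter.mpr fun n => hc n⟩
  -- define φ
  refine ⟨fun x => if h : ∃ n, x ∈ Xn n (Ap p) (Bp p) then x * g h.choose else x, ?_, ?_, ?_⟩
  · intro n x hx
    have h : ∃ m, x ∈ Xn m (Ap p) (Bp p) := ⟨n, hx⟩
    simp only [dif_pos h]
    rw [XnUnique g Xn hXn h.choose_spec hx]
  · ext x
    simp only [Set.mem_iUnion]
    exact ⟨fun ⟨n, hn⟩ => XnSubset g Xn hXn hn, hAfull x⟩
  · refine ⟨?_, ?_, ?_⟩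
    · intro x hx
      have h : ∃ n, x ∈ Xn n (Ap p) (Bp p) := hAfull x hx
      simp only [dif_pos h]
      exact XnMulMem g Xn hXn h.choose_spec
    · intro x hx y hy hxy
      have h1 : ∃ n, x ∈ Xn n (Ap p) (Bp p) := hAfull x hx
      have h2 : ∃ n, y ∈ Xn n (Ap p) (Bp p) := hAfull y hy
      simp only [dif_pos h1, dif_pos h2] at hxy
      exact (XnImgUnique g Xn hXn h1.choose_spec h2.choose_spec hxy).2
    · intro b hb
      obtain ⟨n, hn⟩ := hBfull b hb
      refine ⟨b * (g n)⁻¹, XnSubset g Xn hXn hn, ?_⟩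
      have h : ∃ m, b * (g n)⁻¹ ∈ Xn m (Ap p) (Bp p) := ⟨n, hn⟩
      simp only [dif_pos h]
      rw [XnUnique g Xn hXn h.choose_spec hn]
      simp
end

section
/- Let Γ be a countably infinite group with a fixed enumeration (γ_n)_{n∈ℕ}. For subsets A, B ⊆ Γ define recursively X_n^{A,B} = (A \ ⋃_{m<n} X_m^{A,B}) ∩ ((B \ ⋃_{m<n} X_m^{A,B}·γ_m)·γ_n^{-1}). Then: (i) the sets (X_n^{A,B})_{n∈ℕ} are pairwise disjoint subsets of A, and the sets (X_n^{A,B}·γ_n)_{n∈ℕ} are pairwise disjoint subsets of B; (ii) consequently the map φ^{A,B} sending γ ∈ X_n^{A,B} to γ·γ_n is a well-defined injection from ⋃_n X_n^{A,B} ⊆ A into B; (iii) either the domain of φ^{A,B} equals A or the range of φ^{A,B} equals B; (iv) for every γ ∈ Γ, X_n^{γA, γB} = γ·X_n^{A,B} for all n, and hence φ^{γA,γB}(γx) = γ·φ^{A,B}(x) for all x in the domain of φ^{A,B}. -/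
/-- Basic combinatorial properties of the sets `X_n^{A,B}` and the map
`φ^{A,B}`: (i) disjointness, (ii) `φ` is a well-defined injection from a subset of `A`
into `B`, (iii) the domain is all of `A` or the range is all of `B`,
(iv) equivariance under left translation. -/
theorem stmt_4 {Γ : Type*} [Group Γ] [Countable Γ] [Infinite Γ]
    (g : ℕ → Γ) (hg : Function.Bijective g)
    (Xn : ℕ → Set Γ → Set Γ → Set Γ)
    (hXn : ∀ (n : ℕ) (A B : Set Γ), Xn n A B =
      (A \ ⋃ m < n, Xn m A B) ∩
        ((fun x => x * (g n)⁻¹) '' (B \ ⋃ m < n, (fun x => x * g m) '' Xn m A B))) :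
    -- (i)
    (∀ A B : Set Γ,
      (∀ m n, m ≠ n → Disjoint (Xn m A B) (Xn n A B)) ∧
      (∀ n, Xn n A B ⊆ A) ∧
      (∀ m n, m ≠ n →
        Disjoint ((fun x => x * g m) '' Xn m A B) ((fun x => x * g n) '' Xn n A B)) ∧
      (∀ n, (fun x => x * g n) '' Xn n A B ⊆ B)) ∧
    -- (ii)
    (∀ A B : Set Γ,
      (∃ φ : Γ → Γ, ∀ n, ∀ x ∈ Xn n A B, φ x = x * g n) ∧
      ∀ φ : Γ → Γ, (∀ n, ∀ x ∈ Xn n A B, φ x = x * g n) →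
        Set.InjOn φ (⋃ n, Xn n A B) ∧ (⋃ n, Xn n A B) ⊆ A ∧
          φ '' (⋃ n, Xn n A B) ⊆ B) ∧
    -- (iii)
    (∀ A B : Set Γ,
      (⋃ n, Xn n A B) = A ∨ (⋃ n, (fun x => x * g n) '' Xn n A B) = B) ∧
    -- (iv)
    (∀ (A B : Set Γ) (γ : Γ) (n : ℕ),
      Xn n ((fun x => γ * x) '' A) ((fun x => γ * x) '' B)
        = (fun x => γ * x) '' Xn n A B) ∧
    (∀ (A B : Set Γ) (γ : Γ) (φ φ' : Γ → Γ),
      (∀ n, ∀ x ∈ Xn n A B, φ x = x * g n) →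
      (∀ n, ∀ x ∈ Xn n ((fun x => γ * x) '' A) ((fun x => γ * x) '' B),
        φ' x = x * g n) →
      ∀ x ∈ ⋃ n, Xn n A B, φ' (γ * x) = γ * φ x) := by
  classical
  -- basic structural facts
  have hsubA : ∀ (A B : Set Γ) n, Xn n A B ⊆ A \ ⋃ m < n, Xn m A B := by
    intro A B n x hx
    rw [hXn] at hx; exact hx.1
  have hsubB : ∀ (A B : Set Γ) n,
      (fun x => x * g n) '' Xn n A B ⊆ B \ ⋃ m < n, (fun x => x * g m) '' Xn m A B := by
    intro A B n y hy
    obtain ⟨x, hx, rfl⟩ := hy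
    rw [hXn] at hx
    obtain ⟨b, hb, hbx⟩ := hx.2
    have hxb : x * g n = b := by rw [← hbx]; group
    show x * g n ∈ _
    rw [hxb]; exact hb
  have hdisjA : ∀ (A B : Set Γ) m n, m ≠ n → Disjoint (Xn m A B) (Xn n A B) := by
    have key : ∀ (A B : Set Γ) m n, m < n → Disjoint (Xn m A B) (Xn n A B) := by
      intro A B m n hmn
      refine Set.disjoint_left.mpr fun x hxm hxn => ?_
      exact (hsubA A B n hxn).2 (Set.mem_biUnion hmn hxm)
    intro A B m n h
    rcases h.lt_or_gt with h | h
    · exact key A B m n h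
    · exact (key A B n m h).symm
  have hdisjB : ∀ (A B : Set Γ) m n, m ≠ n →
      Disjoint ((fun x => x * g m) '' Xn m A B) ((fun x => x * g n) '' Xn n A B) := by
    have key : ∀ (A B : Set Γ) m n, m < n →
        Disjoint ((fun x => x * g m) '' Xn m A B) ((fun x => x * g n) '' Xn n A B) := by
      intro A B m n hmn
      refine Set.disjoint_left.mpr fun x hxm hxn => ?_
      exact (hsubB A B n hxn).2 (Set.mem_biUnion hmn hxm)
    intro A B m n h
    rcases h.lt_or_gt with h | h
    · exact key A B m n h
    · exact (key A B n m h).symm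
  have hA : ∀ (A B : Set Γ) n, Xn n A B ⊆ A := fun A B n x hx => (hsubA A B n hx).1
  have hB : ∀ (A B : Set Γ) n, (fun x => x * g n) '' Xn n A B ⊆ B :=
    fun A B n x hx => (hsubB A B n hx).1
  refine ⟨fun A B => ⟨hdisjA A B, hA A B, hdisjB A B, hB A B⟩, ?_, ?_, ?_, ?_⟩
  · -- (ii)
    intro A B
    constructor
    · refine ⟨fun x => if h : ∃ n, x ∈ Xn n A B then x * g (Nat.find h) else x, ?_⟩
      intro n x hx
      have h : ∃ n, x ∈ Xn n A B := ⟨n, hx⟩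
      simp only [dif_pos h]
      have hfind : Nat.find h = n := by
        by_contra hne
        exact Set.disjoint_left.mp (hdisjA A B _ _ hne) (Nat.find_spec h) hx
      rw [hfind]
    · intro φ hφ
      refine ⟨?_, ?_, ?_⟩
      · intro x hx y hy hxy
        obtain ⟨m, hm⟩ := Set.mem_iUnion.mp hx
        obtain ⟨n, hn⟩ := Set.mem_iUnion.mp hy
        rw [hφ m x hm, hφ n y hn] at hxy
        have hmn : m = n := by
          by_contra hne
          exact Set.disjoint_left.mp (hdisjB A B _ _ hne)
            ⟨x, hm, rfl⟩ (show (fun z => z * g m) x ∈ _ by simp only []; rw [hxy]; exact ⟨y, hn, rfl⟩)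
        subst hmn
        exact mul_right_cancel hxy
      · exact Set.iUnion_subset fun n => hA A B n
      · rintro y ⟨x, hx, rfl⟩
        obtain ⟨n, hn⟩ := Set.mem_iUnion.mp hx
        rw [hφ n x hn]
        exact hB A B n ⟨x, hn, rfl⟩
  · -- (iii)
    intro A B
    by_contra hc
    push_neg at hc
    obtain ⟨hU, hV⟩ := hc
    obtain ⟨a, haA, haU⟩ := Set.exists_of_ssubset
      ⟨Set.iUnion_subset (hA A B), fun h => hU (le_antisymm (Set.iUnion_subset (hA A B)) h)⟩
    obtain ⟨b, hbB, hbV⟩ := Set.exists_of_ssubset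
      ⟨Set.iUnion_subset (hB A B), fun h => hV (le_antisymm (Set.iUnion_subset (hB A B)) h)⟩
    obtain ⟨n, hgn⟩ := hg.2 (a⁻¹ * b)
    have hab : a * g n = b := by rw [hgn]; group
    have : a ∈ Xn n A B := by
      rw [hXn]
      refine ⟨⟨haA, fun h => haU ?_⟩, b, ⟨hbB, fun h => hbV ?_⟩, by rw [← hab]; group⟩
      · obtain ⟨S, ⟨m, rfl⟩, hS⟩ := h
        obtain ⟨T, ⟨hm, rfl⟩, hT⟩ := hS
        exact Set.mem_iUnion.mpr ⟨m, hT⟩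
      · obtain ⟨S, ⟨m, rfl⟩, hS⟩ := h
        obtain ⟨T, ⟨hm, rfl⟩, hT⟩ := hS
        exact Set.mem_iUnion.mpr ⟨m, hT⟩
    exact haU (Set.mem_iUnion.mpr ⟨n, this⟩)
  · -- (iv)
    intro A B γ n
    induction n using Nat.strong_induction_on with
    | _ n ih =>
      have hinj : Function.Injective (fun x : Γ => γ * x) := fun a b h => by simpa using h
      have hswap : ∀ (c : Γ) (S : Set Γ),
          (fun x => x * c) '' ((fun x => γ * x) '' S)
            = (fun x => γ * x) '' ((fun x => x * c) '' S) := by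
        intro c S
        rw [Set.image_image, Set.image_image]
        simp [mul_assoc]
      have hU : (⋃ m < n, Xn m ((fun x => γ * x) '' A) ((fun x => γ * x) '' B))
          = (fun x => γ * x) '' ⋃ m < n, Xn m A B := by
        rw [Set.image_iUnion₂]
        exact Set.iUnion₂_congr fun m hm => ih m hm
      have hV : (⋃ m < n, (fun x => x * g m) ''
            Xn m ((fun x => γ * x) '' A) ((fun x => γ * x) '' B))
          = (fun x => γ * x) '' ⋃ m < n, (fun x => x * g m) '' Xn m A B := by
        rw [Set.image_iUnion₂]
        refine Set.iUnion₂_congr fun m hm => ?_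
        rw [ih m hm, hswap]
      rw [hXn, hXn n A B, hU, hV, ← Set.image_diff hinj, ← Set.image_diff hinj,
        hswap, ← Set.image_inter hinj]
  · -- (v)
    intro A B γ φ φ' hφ hφ' x hx
    obtain ⟨n, hn⟩ := Set.mem_iUnion.mp hx
    have hiv : ∀ n, Xn n ((fun x => γ * x) '' A) ((fun x => γ * x) '' B)
        = (fun x => γ * x) '' Xn n A B := by
      intro n
      induction n using Nat.strong_induction_on with
      | _ n ih =>
        have hinj : Function.Injective (fun x : Γ => γ * x) := fun a b h => by simpa using h
        have hswap : ∀ (c : Γ) (S : Set Γ),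
            (fun x => x * c) '' ((fun x => γ * x) '' S)
              = (fun x => γ * x) '' ((fun x => x * c) '' S) := by
          intro c S
          rw [Set.image_image, Set.image_image]
          simp [mul_assoc]
        have hU : (⋃ m < n, Xn m ((fun x => γ * x) '' A) ((fun x => γ * x) '' B))
            = (fun x => γ * x) '' ⋃ m < n, Xn m A B := by
          rw [Set.image_iUnion₂]
          exact Set.iUnion₂_congr fun m hm => ih m hm
        have hV : (⋃ m < n, (fun x => x * g m) ''
              Xn m ((fun x => γ * x) '' A) ((fun x => γ * x) '' B))
            = (fun x => γ * x) '' ⋃ m < n, (fun x => x * g m) '' Xn m A B := by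
          rw [Set.image_iUnion₂]
          refine Set.iUnion₂_congr fun m hm => ?_
          rw [ih m hm, hswap]
        rw [hXn, hXn n A B, hU, hV, ← Set.image_diff hinj, ← Set.image_diff hinj,
          hswap, ← Set.image_inter hinj]
    have h1 : γ * x ∈ Xn n ((fun x => γ * x) '' A) ((fun x => γ * x) '' B) := by
      rw [hiv n]; exact ⟨x, hn, rfl⟩
    rw [hφ' n _ h1, hφ n x hn, mul_assoc]
end

section
/- Let Γ be a countably infinite group, let [Γ]² denote the set of unordered pairs of distinct elements of Γ (with Γ acting by γ·{x,y} = {γx, γy}), fix 0 < p < 1, and let μ be the product Bernoulli(p) measure on 2^([Γ]²), i.e. the law of the random subset R ⊆ [Γ]² obtained by including each pair independently with probability p. Then there is no Γ-invariant Borel probability measure ν on 2^([Γ]²) × 2^Γ (diagonal action) whose pushforward to the first coordinate is μ and such that for ν-almost every (R, T), T is an infinite subset of Γ that is homogeneous for the partition (R, [Γ]² \ R), i.e. either every unordered pair of distinct elements of T belongs to R or no such pair does. -/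
open MeasureTheory

/-- The set `[Γ]²` of unordered pairs of distinct elements of `Γ`. -/
abbrev OffDiagPair (Γ : Type*) := {e : Sym2 Γ // ¬ e.IsDiag}

/-- The unordered pair `{x, y}` for `x ≠ y`. -/
def pairMk {Γ : Type*} (x y : Γ) (h : x ≠ y) : OffDiagPair Γ :=
  ⟨s(x, y), by simpa [Sym2.mk_isDiag_iff] using h⟩

/-- The action of `Γ` on `[Γ]²` induced by left translation: `γ·{x,y} = {γx, γy}`. -/
def pairAct {Γ : Type*} [Group Γ] (γ : Γ) (e : OffDiagPair Γ) : OffDiagPair Γ :=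
  ⟨e.1.map (fun x => γ * x), by
    rw [Sym2.isDiag_map (mul_right_injective γ)]; exact e.2⟩

namespace Stmt5Aux

open Set

variable {Γ : Type*} [Group Γ]

abbrev X (Γ : Type*) := (OffDiagPair Γ → Bool) × (Γ → Bool)

def actMap (γ : Γ) : X Γ → X Γ :=
  fun q => ((fun e => q.1 (pairAct γ⁻¹ e)), fun a => q.2 (γ⁻¹ * a))

lemma meas_eval1 (e : OffDiagPair Γ) : Measurable fun q : X Γ => q.1 e :=
  (measurable_pi_apply e).comp measurable_fst

lemma meas_eval2 (x : Γ) : Measurable fun q : X Γ => q.2 x :=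
  (measurable_pi_apply x).comp measurable_snd

lemma measurable_actMap (γ : Γ) : Measurable (actMap γ) :=
  Measurable.prod
    (measurable_pi_lambda _ (fun e => meas_eval1 (pairAct γ⁻¹ e)))
    (measurable_pi_lambda _ (fun a => meas_eval2 (γ⁻¹ * a)))

def homSet (Γ : Type*) (b : Bool) : Set (X Γ) :=
  {q | ∀ (x y : Γ) (h : x ≠ y), q.2 x = true → q.2 y = true → q.1 (pairMk x y h) = b}

def infSet (Γ : Type*) : Set (X Γ) := {q | {a : Γ | q.2 a = true}.Infinite}

def inT (S : Finset Γ) : Set (X Γ) := {q | ∀ x ∈ S, q.2 x = true}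

def Eset (Γ : Type*) (b : Bool) : Set (X Γ) := infSet Γ ∩ homSet Γ b

lemma measurableSet_eval1 (e : OffDiagPair Γ) (b : Bool) :
    MeasurableSet {q : X Γ | q.1 e = b} :=
  meas_eval1 e (measurableSet_singleton b)

lemma measurableSet_eval2 (x : Γ) (b : Bool) :
    MeasurableSet {q : X Γ | q.2 x = b} :=
  meas_eval2 x (measurableSet_singleton b)

lemma measurableSet_homSet [Countable Γ] (b : Bool) : MeasurableSet (homSet Γ b) := by
  have h : homSet Γ b = ⋂ (x : Γ) (y : Γ) (h : x ≠ y),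
      ({q : X Γ | q.2 x = true}ᶜ ∪ ({q : X Γ | q.2 y = true}ᶜ ∪
        {q : X Γ | q.1 (pairMk x y h) = b})) := by
    ext q
    simp only [homSet, mem_setOf_eq, mem_iInter, mem_union, mem_compl_iff]
    constructor
    · intro H x y h
      by_cases hx : q.2 x = true
      · by_cases hy : q.2 y = true
        · exact Or.inr (Or.inr (H x y h hx hy))
        · exact Or.inr (Or.inl hy)
      · exact Or.inl hx
    · intro H x y h hx hy
      rcases H x y h with h' | h' | h'
      · exact absurd hx h'
      · exact absurd hy h'
      · exact h'
  rw [h]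
  refine MeasurableSet.iInter fun x => MeasurableSet.iInter fun y =>
    MeasurableSet.iInter fun h => ?_
  exact ((measurableSet_eval2 x true).compl).union
    (((measurableSet_eval2 y true).compl).union (measurableSet_eval1 _ b))

lemma measurableSet_infSet [Countable Γ] : MeasurableSet (infSet Γ) := by
  have h : infSet Γ = ⋂ (F : Finset Γ), ⋃ (x : Γ) (_ : x ∉ F), {q : X Γ | q.2 x = true} := by
    ext q
    simp only [infSet, mem_setOf_eq, mem_iInter, mem_iUnion]
    constructor
    · intro h F
      by_contra hc
      push_neg at hc
      refine h (Set.Finite.subset F.finite_toSet ?_)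
      intro x hx
      by_contra hxF
      exact absurd hx (by simpa using hc x hxF)
    · intro h hfin
      obtain ⟨x, hx1, hx2⟩ := h hfin.toFinset
      exact hx1 (by simpa using hx2)
  rw [h]
  exact MeasurableSet.iInter fun F => MeasurableSet.biUnion (to_countable _)
    fun x _ => measurableSet_eval2 x true

lemma measurableSet_inT (S : Finset Γ) : MeasurableSet (inT S) := by
  have h : inT S = ⋂ (x : Γ) (_ : x ∈ S), {q : X Γ | q.2 x = true} := by
    ext q; simp [inT]
  rw [h]
  exact MeasurableSet.biInter (S.countable_toSet) fun x _ => measurableSet_eval2 x true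

lemma measurableSet_Eset [Countable Γ] (b : Bool) : MeasurableSet (Eset Γ b) :=
  measurableSet_infSet.inter (measurableSet_homSet b)

lemma inT_union [DecidableEq Γ] (S₁ S₂ : Finset Γ) : inT (S₁ ∪ S₂) = inT S₁ ∩ inT S₂ := by
  ext q
  simp only [inT, mem_setOf_eq, Finset.mem_union, mem_inter_iff]
  constructor
  · exact fun h => ⟨fun x hx => h x (Or.inl hx), fun x hx => h x (Or.inr hx)⟩
  · rintro ⟨h₁, h₂⟩ x (hx | hx)
    · exact h₁ x hx
    · exact h₂ x hx

lemma pairAct_pairMk (γ x y : Γ) (h : x ≠ y) :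
    pairAct γ (pairMk x y h) = pairMk (γ * x) (γ * y)
      (fun he => h (mul_left_cancel he)) := by
  apply Subtype.ext
  simp [pairAct, pairMk]

lemma actMap_preimage_inT [DecidableEq Γ] (γ : Γ) (S : Finset Γ) :
    actMap γ ⁻¹' inT S = inT (S.image (fun x => γ⁻¹ * x)) := by
  ext q
  simp only [actMap, inT, mem_preimage, mem_setOf_eq, Finset.mem_image]
  constructor
  · rintro h y ⟨x, hx, rfl⟩
    exact h x hx
  · intro h x hx
    exact h _ ⟨x, hx, rfl⟩

lemma actMap_preimage_infSet (γ : Γ) : actMap γ ⁻¹' infSet Γ = infSet Γ := by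
  ext q
  simp only [actMap, infSet, mem_preimage, mem_setOf_eq]
  have h : {a : Γ | q.2 (γ⁻¹ * a) = true} = (fun b => γ * b) '' {a : Γ | q.2 a = true} := by
    ext a
    simp only [mem_setOf_eq, mem_image]
    constructor
    · intro h; exact ⟨γ⁻¹ * a, h, by group⟩
    · rintro ⟨b, hb, rfl⟩; simpa using hb
  rw [h]
  exact Set.infinite_image_iff ((mul_right_injective γ).injOn)

lemma actMap_preimage_homSet (γ : Γ) (b : Bool) :
    actMap γ ⁻¹' homSet Γ b = homSet Γ b := by
  ext q
  simp only [actMap, homSet, mem_preimage, mem_setOf_eq]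
  constructor
  · intro H x y h hx hy
    have h' : γ * x ≠ γ * y := fun he => h (mul_left_cancel he)
    have H2 := H (γ * x) (γ * y) h' (by simpa using hx) (by simpa using hy)
    rw [pairAct_pairMk] at H2
    convert H2 using 2
    apply Subtype.ext
    simp [pairMk]
  · intro H x y h hx hy
    rw [pairAct_pairMk]
    exact H (γ⁻¹ * x) (γ⁻¹ * y) _ hx hy

lemma actMap_preimage_Eset (γ : Γ) (b : Bool) :
    actMap γ ⁻¹' Eset Γ b = Eset Γ b := by
  rw [Eset, Set.preimage_inter, actMap_preimage_infSet, actMap_preimage_homSet]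

end Stmt5Aux

namespace Stmt5Aux

open Set

set_option linter.unusedSectionVars false

variable {Γ : Type*} [Group Γ]

lemma measure_preimage_actMap (ν : Measure (X Γ))
    (hν : ∀ γ : Γ, Measure.map (actMap γ) ν = ν) (γ : Γ) {B : Set (X Γ)}
    (hB : MeasurableSet B) : ν (actMap γ ⁻¹' B) = ν B := by
  conv_rhs => rw [← hν γ]
  rw [Measure.map_apply (measurable_actMap γ) hB]

lemma measure_translate [Countable Γ] [DecidableEq Γ] (ν : Measure (X Γ))
    (hν : ∀ γ : Γ, Measure.map (actMap γ) ν = ν) (b : Bool) (S : Finset Γ) (δ : Γ) :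
    ν (Eset Γ b ∩ inT (S.image (fun x => δ * x))) = ν (Eset Γ b ∩ inT S) := by
  have h : actMap δ⁻¹ ⁻¹' (Eset Γ b ∩ inT S)
      = Eset Γ b ∩ inT (S.image (fun x => δ * x)) := by
    rw [Set.preimage_inter, actMap_preimage_Eset, actMap_preimage_inT, inv_inv]
  rw [← h, measure_preimage_actMap ν hν _ ((measurableSet_Eset b).inter (measurableSet_inT S))]

/-- Bonferroni-type inequality. -/
lemma bonferroni {Y ι : Type*} [MeasurableSpace Y] (ν : Measure Y) [DecidableEq ι]
    (A : ι → Set Y) (hA : ∀ i, MeasurableSet (A i)) (s : Finset ι) :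
    ∑ i ∈ s, ν (A i) ≤ ν (⋃ i ∈ s, A i) + ∑ p ∈ s.offDiag, ν (A p.1 ∩ A p.2) := by
  classical
  induction s using Finset.induction_on with
  | empty => simp
  | @insert a s ha ih =>
    rw [Finset.sum_insert ha]
    have hsub : s.offDiag ∪ {a} ×ˢ s ⊆ (insert a s).offDiag := by
      rw [Finset.offDiag_insert ha]
      exact Finset.subset_union_left
    have hdisj : Disjoint s.offDiag ({a} ×ˢ s) := by
      rw [Finset.disjoint_left]
      rintro ⟨u, v⟩ hp hq
      rw [Finset.mem_offDiag] at hp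
      rw [Finset.mem_product, Finset.mem_singleton] at hq
      exact ha (hq.1 ▸ hp.1)
    have hsum2 : ∑ p ∈ s.offDiag, ν (A p.1 ∩ A p.2) + ∑ i ∈ s, ν (A a ∩ A i)
        ≤ ∑ p ∈ (insert a s).offDiag, ν (A p.1 ∩ A p.2) := by
      have hx : ∑ i ∈ s, ν (A a ∩ A i) = ∑ p ∈ {a} ×ˢ s, ν (A p.1 ∩ A p.2) := by
        rw [Finset.sum_product, Finset.sum_singleton]
      rw [hx, ← Finset.sum_union hdisj]
      exact Finset.sum_le_sum_of_subset hsub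
    have hU : MeasurableSet (⋃ i ∈ s, A i) := s.measurableSet_biUnion (fun i _ => hA i)
    have key : ν (A a) + ν (⋃ i ∈ s, A i)
        ≤ ν (⋃ i ∈ insert a s, A i) + ∑ i ∈ s, ν (A a ∩ A i) := by
      have h1 : ν (A a ∪ ⋃ i ∈ s, A i) + ν (A a ∩ ⋃ i ∈ s, A i)
          = ν (A a) + ν (⋃ i ∈ s, A i) := measure_union_add_inter _ hU
      rw [← h1, Finset.set_biUnion_insert]
      refine add_le_add_right ?_ _
      rw [Set.inter_iUnion₂]
      exact measure_biUnion_finset_le s _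
    calc ν (A a) + ∑ i ∈ s, ν (A i)
        ≤ ν (A a) + (ν (⋃ i ∈ s, A i) + ∑ p ∈ s.offDiag, ν (A p.1 ∩ A p.2)) :=
          add_le_add_right ih _
      _ = (ν (A a) + ν (⋃ i ∈ s, A i)) + ∑ p ∈ s.offDiag, ν (A p.1 ∩ A p.2) := by ring
      _ ≤ (ν (⋃ i ∈ insert a s, A i) + ∑ i ∈ s, ν (A a ∩ A i))
            + ∑ p ∈ s.offDiag, ν (A p.1 ∩ A p.2) := add_le_add_left key _
      _ = ν (⋃ i ∈ insert a s, A i)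
            + (∑ p ∈ s.offDiag, ν (A p.1 ∩ A p.2) + ∑ i ∈ s, ν (A a ∩ A i)) := by ring
      _ ≤ ν (⋃ i ∈ insert a s, A i) + ∑ p ∈ (insert a s).offDiag, ν (A p.1 ∩ A p.2) :=
          add_le_add_right hsum2 _

lemma exists_disjoint_translates [Infinite Γ] [DecidableEq Γ] (S : Finset Γ) (N : ℕ) :
    ∃ d : Fin N → Γ, ∀ i j, i ≠ j →
      Disjoint (S.image (fun x => d i * x)) (S.image (fun x => d j * x)) := by
  induction N with
  | zero => exact ⟨fun i => i.elim0, fun i => i.elim0⟩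
  | succ n ih =>
    obtain ⟨d, hd⟩ := ih
    set B : Finset Γ :=
      Finset.univ.biUnion (fun i : Fin n => (S ×ˢ S).image (fun pq => d i * pq.1 * pq.2⁻¹))
      with hB
    obtain ⟨δ, hδ⟩ := Infinite.exists_notMem_finset B
    have hcross : ∀ i : Fin n,
        Disjoint (S.image (fun x => δ * x)) (S.image (fun x => d i * x)) := by
      intro i
      rw [Finset.disjoint_left]
      rintro z hz1 hz2
      rw [Finset.mem_image] at hz1 hz2
      obtain ⟨y, hy, rfl⟩ := hz1
      obtain ⟨x, hx, hxy⟩ := hz2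
      apply hδ
      rw [hB]
      refine Finset.mem_biUnion.2 ⟨i, Finset.mem_univ i, Finset.mem_image.2
        ⟨(x, y), Finset.mem_product.2 ⟨hx, hy⟩, ?_⟩⟩
      have : δ * y * y⁻¹ = d i * x * y⁻¹ := by rw [← hxy]
      simpa using this.symm
    refine ⟨Fin.snoc d δ, ?_⟩
    intro i j hij
    rcases Fin.eq_castSucc_or_eq_last i with ⟨i', rfl⟩ | rfl <;>
      rcases Fin.eq_castSucc_or_eq_last j with ⟨j', rfl⟩ | rfl
    · simp only [Fin.snoc_castSucc]
      exact hd i' j' (by simpa [Fin.castSucc_inj] using hij)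
    · simp only [Fin.snoc_castSucc, Fin.snoc_last]
      exact (hcross i').symm
    · simp only [Fin.snoc_castSucc, Fin.snoc_last]
      exact hcross j'
    · exact absurd rfl hij

lemma pairMk_eq_iff {x y c d : Γ} (h : x ≠ y) (h' : c ≠ d) :
    pairMk x y h = pairMk c d h' ↔ (x = c ∧ y = d) ∨ (x = d ∧ y = c) := by
  rw [pairMk, pairMk, Subtype.ext_iff]
  exact Sym2.eq_iff

lemma exists_edges [Countable Γ] [DecidableEq Γ] (S : Finset Γ) :
    ∃ F : Finset (OffDiagPair Γ),
      S.card * S.card ≤ 2 * F.card + S.card ∧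
      ∀ e ∈ F, ∃ (x y : Γ) (h : x ≠ y), x ∈ S ∧ y ∈ S ∧ e = pairMk x y h := by
  classical
  obtain ⟨emb, hemb⟩ := exists_injective_nat Γ
  set P : Finset (Γ × Γ) := S.offDiag.filter (fun p => emb p.1 < emb p.2) with hP
  have hPne : ∀ p ∈ P, p.1 ≠ p.2 := by
    intro p hp
    rw [hP, Finset.mem_filter, Finset.mem_offDiag] at hp
    exact hp.1.2.2
  set F : Finset (OffDiagPair Γ) :=
    P.attach.image (fun p => pairMk p.1.1 p.1.2 (hPne p.1 p.2)) with hF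
  refine ⟨F, ?_, ?_⟩
  · -- cardinality bound
    have hcard : F.card = P.card := by
      rw [hF]
      rw [Finset.card_image_of_injOn, Finset.card_attach]
      rintro ⟨p, hp⟩ - ⟨q, hq⟩ - hpq
      simp only [pairMk_eq_iff] at hpq
      have hp' := (Finset.mem_filter.1 hp).2
      have hq' := (Finset.mem_filter.1 hq).2
      rcases hpq with ⟨h1, h2⟩ | ⟨h1, h2⟩
      · exact Subtype.ext (Prod.ext h1 h2)
      · exfalso
        rw [h1, h2] at hp'
        exact absurd (hp'.trans hq') (lt_irrefl _)
    have hswap : (S.offDiag.filter (fun p => ¬ emb p.1 < emb p.2)).card ≤ P.card := by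
      apply Finset.card_le_card_of_injOn Prod.swap
      · intro p hp
        rw [Finset.mem_coe, Finset.mem_filter, Finset.mem_offDiag] at hp
        obtain ⟨⟨h1, h2, h3⟩, h4⟩ := hp
        rw [hP, Finset.mem_coe, Finset.mem_filter, Finset.mem_offDiag]
        refine ⟨⟨h2, h1, fun hc => h3 hc.symm⟩, ?_⟩
        simp only [Prod.fst_swap, Prod.snd_swap]
        exact lt_of_le_of_ne (not_lt.1 h4) (fun hc => h3 (hemb hc.symm))
      · intro p _ q _ hpq
        exact Prod.swap_injective hpq
    have hsplit : S.offDiag.card ≤ 2 * P.card := by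
      have h2 := Finset.card_filter_add_card_filter_not
        (s := S.offDiag) (p := fun p : Γ × Γ => emb p.1 < emb p.2)
      rw [← hP] at h2
      omega
    have hoff : S.offDiag.card = S.card * S.card - S.card := Finset.offDiag_card S
    have h1 : S.card * S.card - S.card ≤ 2 * P.card := hoff ▸ hsplit
    omega
  · -- membership description
    intro e he
    rw [hF, Finset.mem_image] at he
    obtain ⟨⟨p, hp⟩, -, rfl⟩ := he
    have hp' := Finset.mem_filter.1 hp
    have hmem := Finset.mem_offDiag.1 hp'.1
    exact ⟨p.1, p.2, hPne p hp, hmem.1, hmem.2.1, rfl⟩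

lemma step [Countable Γ] [Infinite Γ] [DecidableEq Γ]
    (ν : Measure (X Γ)) [IsProbabilityMeasure ν]
    (hν : ∀ γ : Γ, Measure.map (actMap γ) ν = ν)
    (b : Bool) (S : Finset Γ) (c : ENNReal) (hc0 : c ≠ 0)
    (hc : c ≤ ν (Eset Γ b ∩ inT S)) :
    ∃ S' : Finset Γ, S'.card = 2 * S.card ∧ c ^ 2 / 16 ≤ ν (Eset Γ b ∩ inT S') := by
  classical
  have hc1 : c ≤ 1 := hc.trans (prob_le_one)
  have hcT : c ≠ ⊤ := (hc1.trans_lt (by norm_num)).ne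
  -- find minimal N with 3 ≤ N * c
  have h3c : (3 : ENNReal) / c ≠ ⊤ := (ENNReal.div_lt_top (by norm_num) hc0).ne
  have hex : ∃ N : ℕ, (3 : ENNReal) ≤ (N : ENNReal) * c := by
    obtain ⟨N, hN⟩ := ENNReal.exists_nat_gt h3c
    refine ⟨N, ?_⟩
    calc (3 : ENNReal) = 3 / c * c := (ENNReal.div_mul_cancel hc0 hcT).symm
      _ ≤ (N : ENNReal) * c := mul_le_mul_left hN.le c
  set N := Nat.find hex with hNdef
  have hN3 : (3 : ENNReal) ≤ (N : ENNReal) * c := Nat.find_spec hex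
  have hNpos : N ≠ 0 := by
    intro h
    rw [h] at hN3
    simp at hN3
  have hN4 : (N : ENNReal) * c ≤ 4 := by
    have hN1 : 1 ≤ N := Nat.pos_of_ne_zero hNpos
    have hmin : ¬ ((3 : ENNReal) ≤ ((N - 1 : ℕ) : ENNReal) * c) :=
      Nat.find_min hex (by omega)
    have hcast : ((N : ℕ) : ENNReal) = ((N - 1 : ℕ) : ENNReal) + 1 := by
      have h' : N - 1 + 1 = N := by omega
      rw [← h']
      push_cast
      ring
    rw [hcast, add_mul, one_mul]
    calc ((N - 1 : ℕ) : ENNReal) * c + c ≤ 3 + 1 := add_le_add (not_le.1 hmin).le hc1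
      _ = 4 := by norm_num
  have hNc : (N : ENNReal) ≤ 4 / c :=
    (ENNReal.le_div_iff_mul_le (Or.inl hc0) (Or.inl hcT)).2 hN4
  have hN2 : 2 ≤ N := by
    rcases Nat.lt_or_ge N 2 with h | h
    · exfalso
      have hCast : (N : ENNReal) * c ≤ 2 := by
        calc (N : ENNReal) * c ≤ (N : ENNReal) * 1 := mul_le_mul_right hc1 _
          _ = (N : ENNReal) := mul_one _
          _ ≤ ((2 : ℕ) : ENNReal) := Nat.cast_le.2 h.le
          _ = 2 := by norm_num
      have hcontr := hN3.trans hCast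
      norm_num at hcontr
    · exact h
  -- disjoint translates
  obtain ⟨d, hd⟩ := exists_disjoint_translates S N
  set A : Fin N → Set (X Γ) := fun i => Eset Γ b ∩ inT (S.image (fun x => d i * x)) with hA
  have hAmeas : ∀ i, MeasurableSet (A i) := fun i =>
    (measurableSet_Eset b).inter (measurableSet_inT _)
  have hAν : ∀ i, ν (A i) = ν (Eset Γ b ∩ inT S) := fun i => measure_translate ν hν b S (d i)
  -- Bonferroni
  have hbon := bonferroni ν A hAmeas Finset.univ
  have hsum1 : (N : ENNReal) * c ≤ ∑ i ∈ Finset.univ, ν (A i) := by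
    rw [Finset.sum_congr rfl (fun i _ => hAν i), Finset.sum_const, Finset.card_univ,
      Fintype.card_fin, nsmul_eq_mul]
    exact mul_le_mul_right hc _
  have hUle : ν (⋃ i ∈ Finset.univ, A i) ≤ 1 := prob_le_one
  have hoffsum : 2 ≤ ∑ p ∈ (Finset.univ : Finset (Fin N)).offDiag, ν (A p.1 ∩ A p.2) := by
    have h3 : (3 : ENNReal) ≤ 1 + ∑ p ∈ (Finset.univ : Finset (Fin N)).offDiag, ν (A p.1 ∩ A p.2) :=
      hN3.trans (hsum1.trans (hbon.trans (add_le_add_left hUle _)))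
    have h4 : (1 : ENNReal) + 2 ≤ 1 + ∑ p ∈ (Finset.univ : Finset (Fin N)).offDiag,
        ν (A p.1 ∩ A p.2) := by
      calc (1 : ENNReal) + 2 = 3 := by norm_num
        _ ≤ _ := h3
    exact (ENNReal.add_le_add_iff_left (by norm_num)).1 h4
  -- conclude by contradiction
  by_contra hcon
  push_neg at hcon
  have hterm : ∀ p ∈ (Finset.univ : Finset (Fin N)).offDiag,
      ν (A p.1 ∩ A p.2) ≤ c ^ 2 / 16 := by
    rintro ⟨i, j⟩ hp
    have hij : i ≠ j := (Finset.mem_offDiag.1 hp).2.2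
    have hinter : A i ∩ A j = Eset Γ b ∩ inT
        ((S.image (fun x => d i * x)) ∪ (S.image (fun x => d j * x))) := by
      rw [hA, inT_union]
      ext q
      simp only [mem_inter_iff]
      tauto
    have hcard : ((S.image (fun x => d i * x)) ∪ (S.image (fun x => d j * x))).card
        = 2 * S.card := by
      rw [Finset.card_union_of_disjoint (hd i j hij),
        Finset.card_image_of_injective S (mul_right_injective (d i)),
        Finset.card_image_of_injective S (mul_right_injective (d j))]
      ring
    rw [hinter]
    exact (hcon _ hcard).le
  have hle : ∑ p ∈ (Finset.univ : Finset (Fin N)).offDiag, ν (A p.1 ∩ A p.2)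
      ≤ ∑ _p ∈ (Finset.univ : Finset (Fin N)).offDiag, c ^ 2 / 16 :=
    Finset.sum_le_sum hterm
  have hcount : ((Finset.univ : Finset (Fin N)).offDiag).card ≤ N * N := by
    rw [Finset.offDiag_card]
    simp only [Finset.card_univ, Fintype.card_fin]
    omega
  have hconst : ∑ _p ∈ (Finset.univ : Finset (Fin N)).offDiag, c ^ 2 / 16
      ≤ (N : ENNReal) * (N : ENNReal) * (c ^ 2 / 16) := by
    rw [Finset.sum_const, nsmul_eq_mul]
    calc (((Finset.univ : Finset (Fin N)).offDiag.card : ENNReal)) * (c ^ 2 / 16)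
        ≤ ((N * N : ℕ) : ENNReal) * (c ^ 2 / 16) :=
          mul_le_mul_left (Nat.cast_le.2 hcount) _
      _ = (N : ENNReal) * (N : ENNReal) * (c ^ 2 / 16) := by push_cast; ring
  have hfinal : (N : ENNReal) * (N : ENNReal) * (c ^ 2 / 16) ≤ 1 := by
    have he : (N : ENNReal) * (N : ENNReal) * (c ^ 2 / 16)
        = ((N : ENNReal) * c) * ((N : ENNReal) * c) / 16 := by
      rw [pow_two, div_eq_mul_inv, div_eq_mul_inv]
      ring
    rw [he]
    calc ((N : ENNReal) * c) * ((N : ENNReal) * c) / 16 ≤ 4 * 4 / 16 :=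
        ENNReal.div_le_div_right (mul_le_mul' hN4 hN4) 16
      _ ≤ 1 := by
        rw [ENNReal.div_le_iff_le_mul (Or.inl (by norm_num)) (Or.inl (by norm_num))]
        norm_num
  have hbad : (2 : ENNReal) ≤ 1 := hoffsum.trans (hle.trans (hconst.trans hfinal))
  norm_num at hbad

lemma iterate [Countable Γ] [Infinite Γ] [DecidableEq Γ]
    (ν : Measure (X Γ)) [IsProbabilityMeasure ν]
    (hν : ∀ γ : Γ, Measure.map (actMap γ) ν = ν)
    (b : Bool) (a : ENNReal) (ha0 : a ≠ 0)
    (ha : a ≤ ν (Eset Γ b ∩ inT ({1} : Finset Γ))) :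
    ∀ n : ℕ, ∃ S : Finset Γ, S.card = 2 ^ n ∧
      16 * (a / 16) ^ (2 ^ n) ≤ ν (Eset Γ b ∩ inT S) := by
  intro n
  induction n with
  | zero =>
    refine ⟨{1}, by simp, ?_⟩
    have h16 : 16 * (a / 16) ^ (2 ^ 0) = a := by
      rw [pow_zero, pow_one, mul_comm, ENNReal.div_mul_cancel (by norm_num) (by norm_num)]
    rw [h16]
    exact ha
  | succ n ih =>
    obtain ⟨S, hScard, hS⟩ := ih
    have hr0 : (a / 16 : ENNReal) ≠ 0 := by
      simp only [ne_eq, ENNReal.div_eq_zero_iff, not_or]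
      exact ⟨ha0, by norm_num⟩
    have hc0 : (16 : ENNReal) * (a / 16) ^ (2 ^ n) ≠ 0 :=
      mul_ne_zero (by norm_num) (pow_ne_zero _ hr0)
    obtain ⟨S', hS'card, hS'⟩ := step ν hν b S _ hc0 hS
    refine ⟨S', by rw [hS'card, hScard]; ring, ?_⟩
    refine le_trans (le_of_eq ?_) hS'
    have key : ∀ y : ENNReal, 16 * y ^ 2 = (16 * y) ^ 2 / 16 := by
      intro y
      rw [mul_pow, pow_two (16 : ENNReal), mul_assoc,
        mul_comm (16 : ENNReal) ((16 : ENNReal) * y ^ 2), mul_div_assoc,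
        ENNReal.div_self (by norm_num) (by norm_num), mul_one]
    have hexp : (2 : ℕ) ^ (n + 1) = 2 ^ n * 2 := by ring
    rw [hexp, pow_mul, key ((a / 16) ^ (2 ^ n))]

end Stmt5Aux

theorem stmt_5 {Γ : Type*} [Group Γ] [Countable Γ] [Infinite Γ]
    (p : ENNReal) (hp0 : 0 < p) (hp1 : p < 1)
    (μ : Measure (OffDiagPair Γ → Bool)) [IsProbabilityMeasure μ]
    (hμ : ∀ (F : Finset (OffDiagPair Γ)) (f : OffDiagPair Γ → Bool),
      μ {R | ∀ e ∈ F, R e = f e} = ∏ e ∈ F, (if f e then p else 1 - p)) :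
    ¬ ∃ ν : Measure ((OffDiagPair Γ → Bool) × (Γ → Bool)),
      IsProbabilityMeasure ν ∧
      (∀ γ : Γ, Measure.map
        (fun q : (OffDiagPair Γ → Bool) × (Γ → Bool) =>
          ((fun e => q.1 (pairAct γ⁻¹ e)), fun a => q.2 (γ⁻¹ * a))) ν = ν) ∧
      Measure.map Prod.fst ν = μ ∧
      (∀ᵐ q ∂ν, {a : Γ | q.2 a = true}.Infinite ∧
        ((∀ (x y : Γ) (h : x ≠ y), q.2 x = true → q.2 y = true →
            q.1 (pairMk x y h) = true) ∨
         (∀ (x y : Γ) (h : x ≠ y), q.2 x = true → q.2 y = true →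
            q.1 (pairMk x y h) = false))) := by
  classical
  rintro ⟨ν, hprob, hinv, hfst, hae⟩
  have hinv' : ∀ γ : Γ, Measure.map (Stmt5Aux.actMap γ) ν = ν := hinv
  -- the union of the two homogeneity events has full measure
  have hmeasU : MeasurableSet (Stmt5Aux.Eset Γ true ∪ Stmt5Aux.Eset Γ false) :=
    (Stmt5Aux.measurableSet_Eset true).union (Stmt5Aux.measurableSet_Eset false)
  have hunion : ν (Stmt5Aux.Eset Γ true ∪ Stmt5Aux.Eset Γ false) = 1 := by
    have haenull := ae_iff.1 hae
    have hcne : ν ((Stmt5Aux.Eset Γ true ∪ Stmt5Aux.Eset Γ false)ᶜ) = 0 := by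
      refine measure_mono_null ?_ haenull
      intro q hq
      simp only [Set.mem_compl_iff, Set.mem_union, not_or] at hq
      simp only [Set.mem_setOf_eq, not_and_or, not_or]
      by_cases hI : {a : Γ | q.2 a = true}.Infinite
      · refine Or.inr ⟨?_, ?_⟩
        · intro hT
          exact hq.1 ⟨hI, hT⟩
        · intro hF
          exact hq.2 ⟨hI, hF⟩
      · exact Or.inl hI
    have hcompl := measure_compl hmeasU (measure_ne_top ν _)
    rw [measure_univ, hcne] at hcompl
    have hge : (1 : ENNReal) ≤ ν (Stmt5Aux.Eset Γ true ∪ Stmt5Aux.Eset Γ false) :=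
      tsub_eq_zero_iff_le.1 hcompl.symm
    exact le_antisymm prob_le_one hge
  obtain ⟨b, hb⟩ : ∃ b : Bool, ν (Stmt5Aux.Eset Γ b) ≠ 0 := by
    by_contra h
    push_neg at h
    have hle := measure_union_le (μ := ν) (Stmt5Aux.Eset Γ true) (Stmt5Aux.Eset Γ false)
    rw [hunion, h true, h false] at hle
    norm_num at hle
  -- the singleton probability
  set a := ν (Stmt5Aux.Eset Γ b ∩ Stmt5Aux.inT ({1} : Finset Γ)) with hadef
  have hsingle : ∀ γ : Γ, ν (Stmt5Aux.Eset Γ b ∩ Stmt5Aux.inT ({γ} : Finset Γ)) = a := by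
    intro γ
    have himg : ({1} : Finset Γ).image (fun x => γ * x) = {γ} := by simp
    rw [hadef, ← himg, Stmt5Aux.measure_translate ν hinv' b _ γ]
  have ha0 : a ≠ 0 := by
    intro h
    apply hb
    have hcover : Stmt5Aux.Eset Γ b
        ⊆ ⋃ γ : Γ, (Stmt5Aux.Eset Γ b ∩ Stmt5Aux.inT ({γ} : Finset Γ)) := by
      intro q hq
      obtain ⟨γ, hγ⟩ := hq.1.nonempty
      refine Set.mem_iUnion.2 ⟨γ, hq, ?_⟩
      intro x hx
      rwa [Finset.mem_singleton.1 hx]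
    refine le_antisymm ?_ zero_le
    calc ν (Stmt5Aux.Eset Γ b) ≤ ν (⋃ γ : Γ, (Stmt5Aux.Eset Γ b ∩ Stmt5Aux.inT ({γ} : Finset Γ))) :=
        measure_mono hcover
      _ ≤ ∑' γ : Γ, ν (Stmt5Aux.Eset Γ b ∩ Stmt5Aux.inT ({γ} : Finset Γ)) := measure_iUnion_le _
      _ = ∑' _γ : Γ, (0 : ENNReal) := by
          refine tsum_congr fun γ => ?_
          rw [hsingle γ, ← h]
      _ = 0 := by simp
  -- the edge probability for colour b
  set β := (if b then p else 1 - p : ENNReal) with hβdef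
  have hβ1 : β < 1 := by
    cases b
    · simp only [hβdef, Bool.false_eq_true, if_false]
      exact ENNReal.sub_lt_self (by norm_num) (by norm_num) hp0.ne'
    · simpa [hβdef] using hp1
  -- the upper bound
  have hupper : ∀ S : Finset Γ, ∀ F : Finset (OffDiagPair Γ),
      (∀ e ∈ F, ∃ (x y : Γ) (h : x ≠ y), x ∈ S ∧ y ∈ S ∧ e = pairMk x y h) →
      ν (Stmt5Aux.Eset Γ b ∩ Stmt5Aux.inT S) ≤ β ^ F.card := by
    intro S F hF
    have hcyl : MeasurableSet {R : OffDiagPair Γ → Bool | ∀ e ∈ F, R e = b} := by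
      have hrw : {R : OffDiagPair Γ → Bool | ∀ e ∈ F, R e = b}
          = ⋂ (e : OffDiagPair Γ) (_ : e ∈ F), {R : OffDiagPair Γ → Bool | R e = b} := by
        ext R; simp
      rw [hrw]
      exact MeasurableSet.biInter (F.countable_toSet)
        fun e _ => show MeasurableSet ((fun R : OffDiagPair Γ → Bool => R e) ⁻¹' {b}) from
          (measurable_pi_apply e) (measurableSet_singleton b)
    have hincl : Stmt5Aux.Eset Γ b ∩ Stmt5Aux.inT S
        ⊆ Prod.fst ⁻¹' {R : OffDiagPair Γ → Bool | ∀ e ∈ F, R e = b} := by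
      rintro q ⟨⟨-, hhom⟩, hT⟩
      intro e he
      obtain ⟨x, y, hxy, hxS, hyS, rfl⟩ := hF e he
      exact hhom x y hxy (hT x hxS) (hT y hyS)
    calc ν (Stmt5Aux.Eset Γ b ∩ Stmt5Aux.inT S)
        ≤ ν (Prod.fst ⁻¹' {R : OffDiagPair Γ → Bool | ∀ e ∈ F, R e = b}) := measure_mono hincl
      _ = μ {R : OffDiagPair Γ → Bool | ∀ e ∈ F, R e = b} := by
          rw [← hfst, Measure.map_apply measurable_fst hcyl]
      _ = β ^ F.card := by
          have h := hμ F (fun _ => b)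
          rw [h, Finset.prod_const, hβdef]
  -- choose k with β ^ k < a / 16
  have hr0 : (0 : ENNReal) < a / 16 := by
    rw [pos_iff_ne_zero]
    simp only [ne_eq, ENNReal.div_eq_zero_iff, not_or]
    exact ⟨ha0, by norm_num⟩
  obtain ⟨k, hk⟩ : ∃ k : ℕ, β ^ k < a / 16 := by
    have htend := ENNReal.tendsto_pow_atTop_nhds_zero_of_lt_one hβ1
    exact (htend.eventually (gt_mem_nhds hr0)).exists
  -- run the iteration
  obtain ⟨S, hScard, hSlow⟩ := Stmt5Aux.iterate ν hinv' b a ha0 (le_of_eq hadef) (k + 2)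
  obtain ⟨F, hFcard, hFmem⟩ := Stmt5Aux.exists_edges S
  have hup := hupper S F hFmem
  -- exponent comparison
  have hs_ge : 2 * k + 2 ≤ 2 ^ (k + 2) := by
    have hk2 : k < 2 ^ k := Nat.lt_two_pow_self
    have h4 : 2 ^ (k + 2) = 4 * 2 ^ k := by ring
    omega
  have hks : k * 2 ^ (k + 2) ≤ F.card := by
    have hmul : 2 ^ (k + 2) * (2 * k + 2) ≤ 2 ^ (k + 2) * 2 ^ (k + 2) :=
      Nat.mul_le_mul_left _ hs_ge
    have hdist : 2 ^ (k + 2) * (2 * k + 2) = 2 * (k * 2 ^ (k + 2)) + 2 * 2 ^ (k + 2) := by ring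
    rw [hdist] at hmul
    rw [hScard] at hFcard
    omega
  have hchain : (a / 16) ^ (2 ^ (k + 2)) ≤ ν (Stmt5Aux.Eset Γ b ∩ Stmt5Aux.inT S) :=
    le_trans (le_mul_of_one_le_left zero_le (by norm_num)) hSlow
  have hβle : β ^ F.card ≤ (β ^ k) ^ (2 ^ (k + 2)) := by
    rw [← pow_mul]
    exact pow_le_pow_right_of_le_one' hβ1.le hks
  have hstrict : (β ^ k) ^ (2 ^ (k + 2)) < (a / 16) ^ (2 ^ (k + 2)) :=
    ENNReal.pow_lt_pow_left (by positivity) hk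
  have hcontr : (a / 16) ^ (2 ^ (k + 2)) < (a / 16) ^ (2 ^ (k + 2)) :=
    lt_of_le_of_lt (hchain.trans (hup.trans hβle)) hstrict
  exact absurd hcontr (lt_irrefl _)
end

section
/- Let Γ be a countably infinite group and let [Γ]² denote the set of unordered pairs of distinct elements of Γ, with Γ acting on 2^([Γ]²) by γ·{x,y} = {γx, γy} on pairs. Then there do not exist a comeagre Γ-invariant Borel set X ⊆ 2^([Γ]²) and a Borel Γ-equivariant map f : X → 2^Γ such that for every R ∈ X, f(R) is an infinite subset of Γ homogeneous for the partition (R, [Γ]² \ R), i.e. either every unordered pair of distinct elements of f(R) belongs to R or no such pair does. -/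
open Topology Set Filter

section CylLemmas

variable {I : Type*}

/-- The cylinder of all functions agreeing with `x` on `s`. -/
def cylSet (s : Set I) (x : I → Bool) : Set (I → Bool) := {y | ∀ e ∈ s, y e = x e}

lemma mem_cylSet_self (s : Set I) (x : I → Bool) : x ∈ cylSet s x := fun _ _ => rfl

lemma cylSet_isOpen {s : Set I} (hs : s.Finite) (x : I → Bool) : IsOpen (cylSet s x) := by
  have h : cylSet s x = ⋂ e ∈ s, {y : I → Bool | y e = x e} := by
    ext y; simp [cylSet]
  rw [h]
  refine hs.isOpen_biInter fun e _ => ?_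
  have : {y : I → Bool | y e = x e} = (fun y : I → Bool => y e) ⁻¹' {x e} := by
    ext y; simp
  rw [this]
  exact (continuous_apply e).isOpen_preimage _ (isOpen_discrete _)

lemma exists_cyl_subset {U : Set (I → Bool)} (hU : IsOpen U) {x : I → Bool} (hx : x ∈ U) :
    ∃ s : Set I, s.Finite ∧ cylSet s x ⊆ U := by
  rw [isOpen_pi_iff] at hU
  obtain ⟨F, u, h1, h2⟩ := hU x hx
  exact ⟨F, F.finite_toSet, fun y hy => h2 (by intro i hi; rw [hy i hi]; exact (h1 i hi).2)⟩

/-- Rearranging coordinates along a permutation is a homeomorphism. -/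
def mapHomeo (σ : Equiv.Perm I) : (I → Bool) ≃ₜ (I → Bool) where
  toFun R e := R (σ e)
  invFun R e := R (σ.symm e)
  left_inv R := funext fun e => by simp
  right_inv R := funext fun e => by simp
  continuous_toFun := continuous_pi fun e => continuous_apply _
  continuous_invFun := continuous_pi fun e => continuous_apply _

/-- Flipping one coordinate is a homeomorphism. -/
def flipHomeo [DecidableEq I] (e₀ : I) : (I → Bool) ≃ₜ (I → Bool) where
  toFun R e := if e = e₀ then !(R e) else R e
  invFun R e := if e = e₀ then !(R e) else R e
  left_inv R := funext fun e => by by_cases h : e = e₀ <;> simp [h]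
  right_inv R := funext fun e => by by_cases h : e = e₀ <;> simp [h]
  continuous_toFun := continuous_pi fun e => by
    by_cases h : e = e₀
    · simp only [if_pos h]
      exact Continuous.comp (f := fun R : I → Bool => R e) (g := Bool.not)
        continuous_of_discreteTopology (continuous_apply e)
    · simp only [if_neg h]; exact continuous_apply e
  continuous_invFun := continuous_pi fun e => by
    by_cases h : e = e₀
    · simp only [if_pos h]
      exact Continuous.comp (f := fun R : I → Bool => R e) (g := Bool.not)
        continuous_of_discreteTopology (continuous_apply e)
    · simp only [if_neg h]; exact continuous_apply e

end CylLemmas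

section MeagreLemmas

variable {X : Type*} [TopologicalSpace X]

lemma isMeagre_union' {s t : Set X} (hs : IsMeagre s) (ht : IsMeagre t) : IsMeagre (s ∪ t) := by
  rw [IsMeagre, compl_union]; exact inter_mem hs ht

lemma isMeagre_iUnion'' {ι : Type*} [Countable ι] {A : ι → Set X} (h : ∀ i, IsMeagre (A i)) :
    IsMeagre (⋃ i, A i) := by
  rw [IsMeagre, compl_iUnion]; exact countable_iInter_mem.mpr h

lemma isMeagre_image_homeo {Y : Type*} [TopologicalSpace Y] (h : X ≃ₜ Y) {s : Set X}
    (hs : IsMeagre s) : IsMeagre (h '' s) := by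
  rw [show ⇑h '' s = ⇑h.symm ⁻¹' s from Equiv.image_eq_preimage_symm h.toEquiv s]
  exact hs.preimage_of_isOpenMap h.symm.continuous h.symm.isOpenMap

lemma isOpen_not_isMeagre [BaireSpace X] {V : Set X} (hV : IsOpen V) (hne : V.Nonempty) :
    ¬ IsMeagre V := fun h => by
  obtain ⟨x, hx1, hx2⟩ := (dense_of_mem_residual h).exists_mem_open hV hne
  exact hx1 hx2

lemma localize {I : Type*} [Countable I] {B : Set (I → Bool)} (hB : MeasurableSet B)
    (hnm : ¬ IsMeagre B) :
    ∃ (s : Set I) (x : I → Bool), s.Finite ∧ IsMeagre (cylSet s x \ B) := by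
  obtain ⟨U, hUo, hBU⟩ := hB.residualEq_isOpen
  have hmem : {z : I → Bool | z ∈ B ↔ z ∈ U} ∈ residual _ := eventuallyEq_set.mp hBU
  have hM : IsMeagre {z : I → Bool | ¬ (z ∈ B ↔ z ∈ U)} := by
    rw [IsMeagre, compl_setOf]
    simpa using hmem
  have hUne : U.Nonempty := by
    rcases U.eq_empty_or_nonempty with h | h
    · exfalso
      apply hnm
      refine hM.mono fun z hz => ?_
      simp only [mem_setOf_eq, h]
      simp [hz]
    · exact h
  obtain ⟨x, hx⟩ := hUne
  obtain ⟨s, hsfin, hs⟩ := exists_cyl_subset hUo hx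
  refine ⟨s, x, hsfin, hM.mono ?_⟩
  rintro y ⟨hy1, hy2⟩
  have hyU : y ∈ U := hs hy1
  simp only [mem_setOf_eq]
  intro hiff
  exact hy2 (hiff.mpr hyU)

end MeagreLemmas


section GrpLemmas

variable {Γ : Type*} [Group Γ]

lemma pairAct_pairAct (δ γ : Γ) (e : OffDiagPair Γ) :
    pairAct δ (pairAct γ e) = pairAct (δ * γ) e := by
  apply Subtype.ext
  show Sym2.map _ (Sym2.map _ e.1) = Sym2.map _ e.1
  rw [Sym2.map_map]
  congr 1
  funext z
  simp [mul_assoc]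

lemma pairAct_one (e : OffDiagPair Γ) : pairAct (1 : Γ) e = e := by
  apply Subtype.ext
  show Sym2.map _ e.1 = e.1
  have h : (fun x : Γ => (1:Γ) * x) = id := funext fun x => one_mul x
  rw [h, Sym2.map_id, id_eq]

def pairActPerm (γ : Γ) : Equiv.Perm (OffDiagPair Γ) where
  toFun := pairAct γ
  invFun := pairAct γ⁻¹
  left_inv e := by rw [pairAct_pairAct, inv_mul_cancel, pairAct_one]
  right_inv e := by rw [pairAct_pairAct, mul_inv_cancel, pairAct_one]

lemma pairAct_pairMk (γ : Γ) (x y : Γ) (h : x ≠ y) :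
    pairAct γ (pairMk x y h) = pairMk (γ * x) (γ * y) (fun hc => h (mul_left_cancel hc)) := by
  apply Subtype.ext
  show Sym2.map _ s(x, y) = s(γ * x, γ * y)
  rw [Sym2.map_pair_eq]

lemma mem_pairAct {γ g : Γ} {e : OffDiagPair Γ} : g ∈ (pairAct γ e).1 ↔ γ⁻¹ * g ∈ e.1 := by
  show g ∈ Sym2.map _ e.1 ↔ _
  rw [Sym2.mem_map]
  constructor
  · rintro ⟨a, ha, rfl⟩; simpa [inv_mul_cancel_left] using ha
  · intro h; exact ⟨γ⁻¹ * g, h, by simp [mul_inv_cancel_left]⟩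

omit [Group Γ] in
lemma sym2_mem_finite (z : Sym2 Γ) : {g : Γ | g ∈ z}.Finite := by
  induction z using Sym2.ind with
  | _ u v =>
    have h : {g : Γ | g ∈ s(u, v)} = {u, v} := by ext g; simp [Sym2.mem_iff]
    rw [h]
    exact (finite_singleton v).insert u

end GrpLemmas


/-- There is no comeagre Γ-invariant Borel set `X ⊆ 2^([Γ]²)` together with
a Borel Γ-equivariant map `f : X → 2^Γ` selecting an infinite homogeneous set for every
partition in `X`. -/
theorem stmt_6 {Γ : Type*} [Group Γ] [Countable Γ] [Infinite Γ] :
    ¬ ∃ (X : Set (OffDiagPair Γ → Bool)) (f : (OffDiagPair Γ → Bool) → (Γ → Bool)),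
      MeasurableSet X ∧ IsMeagre Xᶜ ∧
      (∀ γ : Γ, ∀ R ∈ X, (fun e => R (pairAct γ⁻¹ e)) ∈ X) ∧
      Measurable f ∧
      (∀ γ : Γ, ∀ R ∈ X,
        f (fun e => R (pairAct γ⁻¹ e)) = fun a => f R (γ⁻¹ * a)) ∧
      ∀ R ∈ X, {a : Γ | f R a = true}.Infinite ∧
        ((∀ (x y : Γ) (h : x ≠ y), f R x = true → f R y = true →
            R (pairMk x y h) = true) ∨
         (∀ (x y : Γ) (h : x ≠ y), f R x = true → f R y = true →
            R (pairMk x y h) = false)) := by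
  classical
  rintro ⟨X, f, hXm, hXcom, hXinv, hfm, hfeq, hsel⟩
  -- measurability of the elementary sets
  have Emeas : ∀ a : Γ, MeasurableSet {R : OffDiagPair Γ → Bool | f R a = true} := by
    intro a
    have h1 : Measurable fun R : OffDiagPair Γ → Bool => f R a :=
      (measurable_pi_apply a).comp hfm
    have hrw : {R : OffDiagPair Γ → Bool | f R a = true}
        = (fun R : OffDiagPair Γ → Bool => f R a) ⁻¹' {true} := by ext R; simp
    rw [hrw]
    exact h1 (measurableSet_singleton true)
  have Dmeas : ∀ (e : OffDiagPair Γ) (b : Bool),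
      MeasurableSet {R : OffDiagPair Γ → Bool | R e = b} := by
    intro e b
    have h1 : Measurable fun R : OffDiagPair Γ → Bool => R e := measurable_pi_apply e
    have hrw : {R : OffDiagPair Γ → Bool | R e = b}
        = (fun R : OffDiagPair Γ → Bool => R e) ⁻¹' {b} := by ext R; simp
    rw [hrw]
    exact h1 (measurableSet_singleton b)
  -- the two "homogeneous colour" pieces
  set P : Bool → Set (OffDiagPair Γ → Bool) := fun b =>
    {R | R ∈ X ∧ ∀ (x y : Γ) (h : x ≠ y), f R x = true → f R y = true →
      R (pairMk x y h) = b} with hPdef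
  have hPm : ∀ b, MeasurableSet (P b) := by
    intro b
    have hsplit : P b = X ∩ {R : OffDiagPair Γ → Bool | ∀ (x y : Γ) (h : x ≠ y),
        f R x = true → f R y = true → R (pairMk x y h) = b} := rfl
    rw [hsplit]
    refine hXm.inter ?_
    have h : {R : OffDiagPair Γ → Bool | ∀ (x y : Γ) (h : x ≠ y),
        f R x = true → f R y = true → R (pairMk x y h) = b}
        = ⋂ (x : Γ), ⋂ (y : Γ), ⋂ (h : x ≠ y),
          ({R : OffDiagPair Γ → Bool | f R x = true}ᶜ ∪
           ({R : OffDiagPair Γ → Bool | f R y = true}ᶜ ∪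
            {R : OffDiagPair Γ → Bool | R (pairMk x y h) = b})) := by
      ext R
      simp only [mem_setOf_eq, mem_iInter, mem_union, mem_compl_iff]
      constructor
      · intro H x y h
        by_cases h1 : f R x = true
        · by_cases h2 : f R y = true
          · exact Or.inr (Or.inr (H x y h h1 h2))
          · exact Or.inr (Or.inl h2)
        · exact Or.inl h1
      · intro H x y h h1 h2
        rcases H x y h with h3 | h3 | h3
        · exact absurd h1 h3
        · exact absurd h2 h3
        · exact h3
    rw [h]
    refine MeasurableSet.iInter fun x => MeasurableSet.iInter fun y =>
      MeasurableSet.iInter fun hxy => ?_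
    exact ((Emeas x).compl).union (((Emeas y).compl).union (Dmeas _ b))
  -- pick a colour b with P b non-meagre
  have huniv : ¬ IsMeagre (univ : Set (OffDiagPair Γ → Bool)) :=
    isOpen_not_isMeagre isOpen_univ univ_nonempty
  obtain ⟨b, hbnm⟩ : ∃ b : Bool, ¬ IsMeagre (P b) := by
    by_contra h
    push_neg at h
    apply huniv
    refine (isMeagre_union' (isMeagre_union' (h true) (h false)) hXcom).mono ?_
    intro R _
    by_cases hR : R ∈ X
    · rcases (hsel R hR).2 with h' | h'
      · exact Or.inl (Or.inl ⟨hR, h'⟩)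
      · exact Or.inl (Or.inr ⟨hR, h'⟩)
    · exact Or.inr hR
  -- pick a with "a ∈ f R" non-meagre within P b
  obtain ⟨a, hanm⟩ : ∃ a : Γ,
      ¬ IsMeagre (P b ∩ {R : OffDiagPair Γ → Bool | f R a = true}) := by
    by_contra h
    push_neg at h
    apply hbnm
    refine (isMeagre_iUnion'' h).mono ?_
    intro R hR
    obtain ⟨a, ha⟩ := ((hsel R hR.1).1).nonempty
    exact mem_iUnion.mpr ⟨a, hR, ha⟩
  set A : Set (OffDiagPair Γ → Bool) :=
    P b ∩ {R : OffDiagPair Γ → Bool | f R a = true} with hAdef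
  have hAm : MeasurableSet A := (hPm b).inter (Emeas a)
  obtain ⟨s, x₀, hsfin, hsA⟩ := localize hAm hanm
  -- the finite set of relevant group elements
  set D : Set Γ := insert a {g : Γ | ∃ e ∈ s, g ∈ (e : OffDiagPair Γ).1} with hDdef
  have hDfin : D.Finite := by
    refine Finite.insert a ?_
    have h : {g : Γ | ∃ e ∈ s, g ∈ (e : OffDiagPair Γ).1}
        = ⋃ e ∈ s, {g : Γ | g ∈ (e : OffDiagPair Γ).1} := by
      ext g; simp
    rw [h]
    exact hsfin.biUnion fun e _ => sym2_mem_finite _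
  have hsD : ∀ e ∈ s, ∀ g ∈ (e : OffDiagPair Γ).1, g ∈ D :=
    fun e he g hg => mem_insert_iff.mpr (Or.inr ⟨e, he, hg⟩)
  -- choose a generic γ
  have hbadfin : {γ : Γ | γ = 1 ∨ γ * a ∈ D ∨ γ⁻¹ * a ∈ D ∨ ∃ d₁ ∈ D, γ * d₁ ∈ D}.Finite := by
    have h2 : ((fun γ : Γ => γ * a) ⁻¹' D).Finite :=
      hDfin.preimage (Function.Injective.injOn (mul_left_injective a))
    have h3 : ((fun γ : Γ => γ⁻¹ * a) ⁻¹' D).Finite := by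
      refine hDfin.preimage (Function.Injective.injOn ?_)
      intro u v huv
      simp only at huv
      exact inv_injective (mul_right_cancel huv)
    have h4 : (Set.image2 (fun d₂ d₁ : Γ => d₂ * d₁⁻¹) D D).Finite := hDfin.image2 _ hDfin
    refine (((((finite_singleton (1 : Γ)).union h2).union h3).union h4)).subset ?_
    intro γ hγ
    rcases hγ with h | h | h | ⟨d₁, hd₁, hd₂⟩
    · exact Or.inl (Or.inl (Or.inl h))
    · exact Or.inl (Or.inl (Or.inr h))
    · exact Or.inl (Or.inr h)
    · exact Or.inr ⟨γ * d₁, hd₂, d₁, hd₁, by group⟩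
  obtain ⟨γ, hγ⟩ := hbadfin.infinite_compl.nonempty
  simp only [mem_compl_iff, mem_setOf_eq, not_or, not_exists] at hγ
  obtain ⟨hγ1, hγ2, hγ3, hγ4⟩ := hγ
  have hγ4' : ∀ d₁ ∈ D, γ * d₁ ∉ D := by
    intro d hd hcon
    exact (hγ4 d) ⟨hd, hcon⟩
  have hne : a ≠ γ * a := by
    intro h
    exact hγ1 (mul_right_cancel (show γ * a = 1 * a by rw [one_mul, ← h]))
  set e₀ : OffDiagPair Γ := pairMk a (γ * a) hne with he₀def
  -- the translation homeomorphism
  set Th : (OffDiagPair Γ → Bool) ≃ₜ (OffDiagPair Γ → Bool) := mapHomeo (pairActPerm γ⁻¹)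
    with hThdef
  set T : (OffDiagPair Γ → Bool) → (OffDiagPair Γ → Bool) :=
    fun R => fun e => R (pairAct γ⁻¹ e) with hTdef
  have hTh : ⇑Th = T := rfl
  -- invariance of P b under T
  have hPinv : ∀ R ∈ P b, T R ∈ P b := by
    intro R hR
    refine ⟨hXinv γ R hR.1, ?_⟩
    intro x y h hx hy
    have hfe := hfeq γ R hR.1
    have hx' : f R (γ⁻¹ * x) = true := by
      have hc := congrFun hfe x
      rw [← hc]; exact hx
    have hy' : f R (γ⁻¹ * y) = true := by
      have hc := congrFun hfe y
      rw [← hc]; exact hy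
    have key := hR.2 (γ⁻¹ * x) (γ⁻¹ * y) (fun hc => h (mul_left_cancel hc)) hx' hy'
    show R (pairAct γ⁻¹ (pairMk x y h)) = b
    rw [pairAct_pairMk]
    exact key
  -- the translated witness set
  have hA'sub : T '' A ⊆ P b ∩ {R : OffDiagPair Γ → Bool | f R (γ * a) = true} := by
    rintro _ ⟨R, hR, rfl⟩
    refine ⟨hPinv R hR.1, ?_⟩
    have hfe := hfeq γ R hR.1.1
    show f (T R) (γ * a) = true
    have hc := congrFun hfe (γ * a)
    rw [hTdef]
    simp only at hc ⊢
    rw [hc, inv_mul_cancel_left]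
    exact hR.2
  set s₂ : Set (OffDiagPair Γ) := pairAct γ '' s with hs₂def
  set x₂ : OffDiagPair Γ → Bool := T x₀ with hx₂def
  have himg : T '' cylSet s x₀ = cylSet s₂ x₂ := by
    ext y
    constructor
    · rintro ⟨z, hz, rfl⟩ e he
      obtain ⟨e', he', rfl⟩ := he
      show z (pairAct γ⁻¹ (pairAct γ e')) = x₀ (pairAct γ⁻¹ (pairAct γ e'))
      rw [pairAct_pairAct, inv_mul_cancel, pairAct_one]
      exact hz e' he'
    · intro hy
      refine ⟨fun e => y (pairAct γ e), fun e he => ?_, ?_⟩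
      · have h := hy (pairAct γ e) ⟨e, he, rfl⟩
        show y (pairAct γ e) = x₀ e
        rw [h]
        show x₀ (pairAct γ⁻¹ (pairAct γ e)) = x₀ e
        rw [pairAct_pairAct, inv_mul_cancel, pairAct_one]
      · funext e
        show y (pairAct γ (pairAct γ⁻¹ e)) = y e
        rw [pairAct_pairAct, mul_inv_cancel, pairAct_one]
  have hs₂A' : IsMeagre (cylSet s₂ x₂ \ (T '' A)) := by
    have h : cylSet s₂ x₂ \ (T '' A) = T '' (cylSet s x₀ \ A) := by
      rw [image_diff (hTh ▸ Th.injective), himg]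
    rw [h, ← hTh]
    exact isMeagre_image_homeo Th hsA
  -- disjointness facts
  have hdisj : ∀ e ∈ s, e ∉ s₂ := by
    rintro e he ⟨e', he', heq⟩
    have hd : (e' : OffDiagPair Γ).1.out.1 ∈ D := hsD e' he' _ (Sym2.out_fst_mem _)
    have hgd : γ * (e' : OffDiagPair Γ).1.out.1 ∈ (e : OffDiagPair Γ).1 := by
      rw [← heq]
      exact mem_pairAct.mpr (by rw [inv_mul_cancel_left]; exact Sym2.out_fst_mem _)
    exact hγ4' _ hd (hsD e he _ hgd)
  have he₀s : e₀ ∉ s := by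
    intro h
    refine hγ2 (hsD e₀ h (γ * a) ?_)
    show γ * a ∈ s(a, γ * a)
    exact Sym2.mem_mk_right a (γ * a)
  have he₀s₂ : e₀ ∉ s₂ := by
    rintro ⟨e', he', heq⟩
    have ha' : a ∈ (pairAct γ e' : OffDiagPair Γ).1 := by
      rw [heq]
      show a ∈ s(a, γ * a)
      exact Sym2.mem_mk_left a (γ * a)
    exact hγ3 (hsD e' he' _ (mem_pairAct.mp ha'))
  -- the open set V
  set x₃ : OffDiagPair Γ → Bool := fun e => if e ∈ s then x₀ e else x₂ e with hx₃def
  set V : Set (OffDiagPair Γ → Bool) := cylSet (s ∪ s₂) x₃ with hVdef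
  have hVopen : IsOpen V := cylSet_isOpen (hsfin.union (hsfin.image _)) x₃
  have hVne : V.Nonempty := ⟨x₃, fun e _ => rfl⟩
  have hVsub1 : V ⊆ cylSet s x₀ := by
    intro y hy e he
    rw [hy e (Or.inl he)]
    show (if e ∈ s then x₀ e else x₂ e) = x₀ e
    rw [if_pos he]
  have hVsub2 : V ⊆ cylSet s₂ x₂ := by
    intro y hy e he
    rw [hy e (Or.inr he)]
    show (if e ∈ s then x₀ e else x₂ e) = x₂ e
    rw [if_neg (fun hc => hdisj e hc he)]
  -- the flip homeomorphism
  set φ : (OffDiagPair Γ → Bool) ≃ₜ (OffDiagPair Γ → Bool) := flipHomeo e₀ with hφdef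
  have hφapp : ∀ R e, φ R e = if e = e₀ then !(R e) else R e := fun R e => rfl
  have hφV : ∀ R, R ∈ V ↔ φ R ∈ V := by
    intro R
    have key : ∀ e ∈ s ∪ s₂, φ R e = R e := by
      intro e he
      have hne' : e ≠ e₀ := by
        rintro rfl
        rcases he with h | h
        · exact he₀s h
        · exact he₀s₂ h
      rw [hφapp, if_neg hne']
    constructor
    · intro h e he; rw [key e he]; exact h e he
    · intro h e he
      have h' := h e he
      rw [key e he] at h'
      exact h'
  -- find a generic point
  set M : Set (OffDiagPair Γ → Bool) :=
    ((cylSet s x₀ \ A) ∪ (cylSet s₂ x₂ \ (T '' A))) ∪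
      ⇑φ ⁻¹' ((cylSet s x₀ \ A) ∪ (cylSet s₂ x₂ \ (T '' A))) with hMdef
  have hMmeag : IsMeagre M := by
    have h12 := isMeagre_union' hsA hs₂A'
    exact isMeagre_union' h12 (h12.preimage_of_isOpenMap φ.continuous φ.isOpenMap)
  obtain ⟨R, hRV, hRM⟩ : ∃ R, R ∈ V ∧ R ∉ M := by
    by_contra h
    push_neg at h
    exact isOpen_not_isMeagre hVopen hVne (hMmeag.mono h)
  have hR1 : R ∉ cylSet s x₀ \ A := fun h => hRM (Or.inl (Or.inl h))
  have hR2 : R ∉ cylSet s₂ x₂ \ (T '' A) := fun h => hRM (Or.inl (Or.inr h))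
  have hR3 : φ R ∉ cylSet s x₀ \ A := fun h => hRM (Or.inr (Or.inl h))
  have hR4 : φ R ∉ cylSet s₂ x₂ \ (T '' A) := fun h => hRM (Or.inr (Or.inr h))
  have hφRV : φ R ∈ V := (hφV R).mp hRV
  have hRA : R ∈ A := by
    by_contra h
    exact hR1 ⟨hVsub1 hRV, h⟩
  have hRA' : R ∈ T '' A := by
    by_contra h
    exact hR2 ⟨hVsub2 hRV, h⟩
  have hφRA : φ R ∈ A := by
    by_contra h
    exact hR3 ⟨hVsub1 hφRV, h⟩
  have hφRA' : φ R ∈ T '' A := by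
    by_contra h
    exact hR4 ⟨hVsub2 hφRV, h⟩
  have key : ∀ S : OffDiagPair Γ → Bool, S ∈ A → S ∈ T '' A → S e₀ = b := by
    intro S hS hS'
    obtain ⟨hSP, hSE'⟩ := hA'sub hS'
    exact hSP.2 a (γ * a) hne hS.2 hSE'
  have h1 := key R hRA hRA'
  have h2 := key (φ R) hφRA hφRA'
  rw [hφapp, if_pos rfl, h1] at h2
  simp at h2
end

section
/- Let Γ be a countably infinite group and let PO(Γ) ⊆ 2^(Γ×Γ) be the (closed) set of partial orders on Γ, i.e. reflexive, antisymmetric, transitive binary relations, equipped with the logic action of Γ. Then there do not exist a Γ-invariant Borel set X ⊆ PO(Γ) that is comeagre in PO(Γ) (in the subspace topology) and a Borel Γ-equivariant map f : X → 2^(Γ×Γ) such that for every P ∈ X, f(P) is a linear order on Γ (a total partial order) containing P. -/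
open Topology Filter Set

/-- The logic action of `Γ` on binary relations on `Γ` (coded as points of `2^(Γ×Γ)`):
`(γ·R)(x,y) ⇔ R(γ⁻¹x, γ⁻¹y)`. -/
def logicAct {Γ : Type*} [Group Γ] (γ : Γ) (R : Γ × Γ → Bool) : Γ × Γ → Bool :=
  fun q => R (γ⁻¹ * q.1, γ⁻¹ * q.2)

/-- `R` codes a partial order on `Γ`: reflexive, antisymmetric and transitive. -/
def IsPartialOrderRel {Γ : Type*} (R : Γ × Γ → Bool) : Prop :=
  (∀ x, R (x, x) = true) ∧
  (∀ x y, R (x, y) = true → R (y, x) = true → x = y) ∧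
  (∀ x y z, R (x, y) = true → R (y, z) = true → R (x, z) = true)

section Basic

variable {Γ : Type*} [Group Γ]

lemma logicAct_inv_cancel (γ : Γ) (R : Γ × Γ → Bool) :
    logicAct γ (logicAct γ⁻¹ R) = R := by
  funext q
  simp [logicAct]

lemma logicAct_cancel_inv (γ : Γ) (R : Γ × Γ → Bool) :
    logicAct γ⁻¹ (logicAct γ R) = R := by
  funext q
  simp [logicAct]

lemma IsPartialOrderRel.logicAct {R : Γ × Γ → Bool} (hR : IsPartialOrderRel R) (γ : Γ) :
    IsPartialOrderRel (_root_.logicAct γ R) := by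
  obtain ⟨h1, h2, h3⟩ := hR
  refine ⟨fun x => h1 _, fun x y hxy hyx => ?_, fun x y z hxy hyz => h3 _ _ _ hxy hyz⟩
  exact mul_left_cancel (h2 _ _ hxy hyx)

lemma continuous_logicAct (γ : Γ) :
    Continuous (logicAct γ : (Γ × Γ → Bool) → (Γ × Γ → Bool)) :=
  continuous_pi fun q => continuous_apply (γ⁻¹ * q.1, γ⁻¹ * q.2)

lemma isOpen_eval (q : Γ × Γ) (v : Bool) : IsOpen {R : Γ × Γ → Bool | R q = v} := by
  have : {R : Γ × Γ → Bool | R q = v} = (fun R : Γ × Γ → Bool => R q) ⁻¹' {v} := rfl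
  rw [this]
  exact (isOpen_discrete ({v} : Set Bool)).preimage (continuous_apply q)

lemma isClosed_eval (q : Γ × Γ) (v : Bool) : IsClosed {R : Γ × Γ → Bool | R q = v} := by
  have : {R : Γ × Γ → Bool | R q = v} = (fun R : Γ × Γ → Bool => R q) ⁻¹' {v} := rfl
  rw [this]
  exact (isClosed_discrete ({v} : Set Bool)).preimage (continuous_apply q)

lemma isClosed_po : IsClosed {R : Γ × Γ → Bool | IsPartialOrderRel R} := by
  have h1 : IsClosed {R : Γ × Γ → Bool | ∀ x : Γ, R (x, x) = true} := by
    have : {R : Γ × Γ → Bool | ∀ x : Γ, R (x, x) = true}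
        = ⋂ x : Γ, {R : Γ × Γ → Bool | R (x, x) = true} := by
      ext R; simp
    rw [this]
    exact isClosed_iInter fun x => isClosed_eval (x, x) true
  have h2 : IsClosed {R : Γ × Γ → Bool |
      ∀ x y : Γ, R (x, y) = true → R (y, x) = true → x = y} := by
    have : {R : Γ × Γ → Bool | ∀ x y : Γ, R (x, y) = true → R (y, x) = true → x = y}
        = ⋂ (x : Γ) (y : Γ),
          {R : Γ × Γ → Bool | R (x, y) = true → R (y, x) = true → x = y} := by
      ext R; simp
    rw [this]
    refine isClosed_iInter fun x => isClosed_iInter fun y => ?_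
    by_cases hxy : x = y
    · have : {R : Γ × Γ → Bool | R (x, y) = true → R (y, x) = true → x = y} = univ := by
        subst hxy
        ext R
        simp [mem_setOf_eq]
      rw [this]
      exact isClosed_univ
    · have : {R : Γ × Γ → Bool | R (x, y) = true → R (y, x) = true → x = y}
          = ({R : Γ × Γ → Bool | R (x, y) = true} ∩ {R : Γ × Γ → Bool | R (y, x) = true})ᶜ := by
        ext R
        simp only [mem_setOf_eq, mem_compl_iff, mem_inter_iff, not_and]
        tauto
      rw [this]
      exact (IsOpen.inter (isOpen_eval _ _) (isOpen_eval _ _)).isClosed_compl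
  have h3 : IsClosed {R : Γ × Γ → Bool |
      ∀ x y z : Γ, R (x, y) = true → R (y, z) = true → R (x, z) = true} := by
    have : {R : Γ × Γ → Bool | ∀ x y z : Γ, R (x, y) = true → R (y, z) = true → R (x, z) = true}
        = ⋂ (x : Γ) (y : Γ) (z : Γ),
          ({R : Γ × Γ → Bool | R (x, y) = true} ∩ {R : Γ × Γ → Bool | R (y, z) = true}
            ∩ {R : Γ × Γ → Bool | R (x, z) = true}ᶜ)ᶜ := by
      ext R
      simp only [mem_iInter, mem_setOf_eq, mem_compl_iff, mem_inter_iff, not_and, not_not]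
      tauto
    rw [this]
    refine isClosed_iInter fun x => isClosed_iInter fun y => isClosed_iInter fun z => ?_
    exact (((isOpen_eval _ _).inter (isOpen_eval _ _)).inter
      (isClosed_eval _ _).isOpen_compl).isClosed_compl
  have : {R : Γ × Γ → Bool | IsPartialOrderRel R} =
      {R : Γ × Γ → Bool | ∀ x : Γ, R (x, x) = true}
      ∩ ({R : Γ × Γ → Bool | ∀ x y : Γ, R (x, y) = true → R (y, x) = true → x = y}
        ∩ {R : Γ × Γ → Bool |
            ∀ x y z : Γ, R (x, y) = true → R (y, z) = true → R (x, z) = true}) := rfl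
  rw [this]
  exact h1.inter (h2.inter h3)

end Basic

lemma IsMeagre.union' {X : Type*} [TopologicalSpace X] {s t : Set X}
    (hs : IsMeagre s) (ht : IsMeagre t) : IsMeagre (s ∪ t) := by
  rw [IsMeagre, compl_union]
  exact Filter.inter_mem hs ht

lemma not_isMeagre_of_isOpen' {X : Type*} [TopologicalSpace X] [BaireSpace X] {U : Set X}
    (hU : IsOpen U) (hne : U.Nonempty) : ¬ IsMeagre U := by
  intro h
  have hd : Dense Uᶜ := dense_of_mem_residual h
  have : Uᶜ = univ := hU.isClosed_compl.closure_eq ▸ hd.closure_eq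
  obtain ⟨x, hx⟩ := hne
  exact (this ▸ fun (h : x ∈ Uᶜ) => h hx) (mem_univ x)

lemma exists_open_not_meagre {X : Type*} [TopologicalSpace X] [BaireSpace X] {U M : Set X}
    (hU : IsOpen U) (hne : U.Nonempty) (hM : IsMeagre M) : ∃ x ∈ U, x ∉ M := by
  have hd : Dense Mᶜ := dense_of_mem_residual hM
  obtain ⟨x, hxU, hxM⟩ := hd.inter_open_nonempty U hU hne
  exact ⟨x, hxU, hxM⟩

section Amalg

variable {Γ : Type*} [Group Γ]

open Classical in
/-- The amalgamated partial order: on `D` it is `P`, on `γ·D` it is the `γ`-translate of `P`,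
and it has the cross relations `b ≤ γ·a` and `γ·b ≤ a` (propagated transitively). -/
noncomputable def amalg (P : Γ × Γ → Bool) (D : Set Γ) (a b γ : Γ) : Γ × Γ → Bool :=
  fun q =>
    decide (q.1 = q.2
      ∨ (q.1 ∈ D ∧ q.2 ∈ D ∧ P (q.1, q.2) = true)
      ∨ (γ⁻¹ * q.1 ∈ D ∧ γ⁻¹ * q.2 ∈ D ∧ P (γ⁻¹ * q.1, γ⁻¹ * q.2) = true)
      ∨ (q.1 ∈ D ∧ γ⁻¹ * q.2 ∈ D ∧ P (q.1, b) = true ∧ P (a, γ⁻¹ * q.2) = true)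
      ∨ (γ⁻¹ * q.1 ∈ D ∧ q.2 ∈ D ∧ P (γ⁻¹ * q.1, b) = true ∧ P (a, q.2) = true))

variable {P : Γ × Γ → Bool} {D : Set Γ} {a b γ : Γ}

open Classical in
lemma amalg_eq_true_iff {x y : Γ} :
    amalg P D a b γ (x, y) = true ↔ (x = y
      ∨ (x ∈ D ∧ y ∈ D ∧ P (x, y) = true)
      ∨ (γ⁻¹ * x ∈ D ∧ γ⁻¹ * y ∈ D ∧ P (γ⁻¹ * x, γ⁻¹ * y) = true)
      ∨ (x ∈ D ∧ γ⁻¹ * y ∈ D ∧ P (x, b) = true ∧ P (a, γ⁻¹ * y) = true)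
      ∨ (γ⁻¹ * x ∈ D ∧ y ∈ D ∧ P (γ⁻¹ * x, b) = true ∧ P (a, y) = true)) := by
  unfold amalg
  exact decide_eq_true_iff

variable (hP : IsPartialOrderRel P) (ha : a ∈ D) (hb : b ∈ D)
  (hab : P (a, b) = false) (hdisj : ∀ x ∈ D, γ⁻¹ * x ∉ D)

include hP ha hb hab hdisj in
lemma amalg_po : IsPartialOrderRel (amalg P D a b γ) := by
  obtain ⟨hrefl, hanti, htrans⟩ := hP
  have hfab : P (a, b) ≠ true := by simp [hab]
  refine ⟨fun x => ?_, fun x y hxy hyx => ?_, fun x y z hxy hyz => ?_⟩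
  · rw [amalg_eq_true_iff]; left; rfl
  · -- antisymmetry
    rw [amalg_eq_true_iff] at hxy hyx
    rcases hxy with h | ⟨hx, hy, hPxy⟩ | ⟨hx, hy, hPxy⟩ | ⟨hx, hy, hxb, hay⟩
      | ⟨hx, hy, hxb, hay⟩
    · exact h
    · rcases hyx with h | ⟨_, _, hPyx⟩ | ⟨h1, h2, _⟩ | ⟨h1, h2, _, _⟩ | ⟨h1, h2, _, _⟩
      · exact h.symm
      · exact hanti _ _ hPxy hPyx
      · exact absurd h2 (hdisj x hx)
      · exact absurd h2 (hdisj x hx)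
      · exact absurd h1 (hdisj y hy)
    · rcases hyx with h | ⟨h1, h2, _⟩ | ⟨h1, h2, hPyx⟩ | ⟨h1, h2, _, _⟩ | ⟨h1, h2, _, _⟩
      · exact h.symm
      · exact absurd hy (hdisj y h1)
      · exact mul_left_cancel (hanti _ _ hPxy hPyx)
      · exact absurd hy (hdisj y h1)
      · exact absurd hx (hdisj x h2)
    · rcases hyx with h | ⟨h1, h2, _⟩ | ⟨h1, h2, _⟩ | ⟨h1, h2, _, _⟩ | ⟨h1, h2, hyb, hax⟩
      · exact absurd hy (by rw [h]; exact hdisj x hx)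
      · exact absurd hy (hdisj y h1)
      · exact absurd h2 (hdisj x hx)
      · exact absurd hy (hdisj y h1)
      · exact absurd (htrans a _ b hay hyb) hfab
    · rcases hyx with h | ⟨h1, h2, _⟩ | ⟨h1, h2, _⟩ | ⟨h1, h2, hyb, hax⟩ | ⟨h1, h2, _, _⟩
      · exact absurd hx (by rw [← h]; exact hdisj y hy)
      · exact absurd hx (hdisj x h2)
      · exact absurd h1 (hdisj y hy)
      · exact absurd (htrans a y b hay hyb) hfab
      · exact absurd h1 (hdisj y hy)
  · -- transitivity
    rw [amalg_eq_true_iff] at hxy hyz ⊢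
    rcases hxy with h | ⟨hx, hy, hPxy⟩ | ⟨hx, hy, hPxy⟩ | ⟨hx, hy, hxb, hay⟩
      | ⟨hx, hy, hxb, hay⟩
    · subst h; exact hyz
    · rcases hyz with h | ⟨h1, h2, hPyz⟩ | ⟨h1, h2, _⟩ | ⟨h1, h2, hyb, haz⟩ | ⟨h1, h2, _, _⟩
      · subst h
        exact Or.inr (Or.inl ⟨hx, hy, hPxy⟩)
      · exact Or.inr (Or.inl ⟨hx, h2, htrans _ _ _ hPxy hPyz⟩)
      · exact absurd h1 (hdisj y hy)
      · exact Or.inr (Or.inr (Or.inr (Or.inl ⟨hx, h2, htrans _ _ _ hPxy hyb, haz⟩)))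
      · exact absurd h1 (hdisj y hy)
    · rcases hyz with h | ⟨h1, h2, _⟩ | ⟨h1, h2, hPyz⟩ | ⟨h1, h2, _, _⟩ | ⟨h1, h2, hyb, haz⟩
      · subst h
        exact Or.inr (Or.inr (Or.inl ⟨hx, hy, hPxy⟩))
      · exact absurd hy (hdisj y h1)
      · exact Or.inr (Or.inr (Or.inl ⟨hx, h2, htrans _ _ _ hPxy hPyz⟩))
      · exact absurd hy (hdisj y h1)
      · exact Or.inr (Or.inr (Or.inr (Or.inr ⟨hx, h2, htrans _ _ _ hPxy hyb, haz⟩)))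
    · rcases hyz with h | ⟨h1, h2, _⟩ | ⟨h1, h2, hPyz⟩ | ⟨h1, h2, _, _⟩ | ⟨h1, h2, hyb, haz⟩
      · subst h
        exact Or.inr (Or.inr (Or.inr (Or.inl ⟨hx, hy, hxb, hay⟩)))
      · exact absurd hy (hdisj y h1)
      · exact Or.inr (Or.inr (Or.inr (Or.inl ⟨hx, h2, hxb, htrans _ _ _ hay hPyz⟩)))
      · exact absurd hy (hdisj y h1)
      · exact absurd (htrans a _ b hay hyb) hfab
    · rcases hyz with h | ⟨h1, h2, hPyz⟩ | ⟨h1, h2, _⟩ | ⟨h1, h2, hyb, haz⟩ | ⟨h1, h2, _, _⟩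
      · subst h
        exact Or.inr (Or.inr (Or.inr (Or.inr ⟨hx, hy, hxb, hay⟩)))
      · exact Or.inr (Or.inr (Or.inr (Or.inr ⟨hx, h2, hxb, htrans _ _ _ hay hPyz⟩)))
      · exact absurd h1 (hdisj y hy)
      · exact absurd (htrans a _ b hay hyb) hfab
      · exact absurd h1 (hdisj y hy)

include hP hdisj in
lemma amalg_on_D {x y : Γ} (hx : x ∈ D) (hy : y ∈ D) :
    amalg P D a b γ (x, y) = P (x, y) := by
  obtain ⟨hrefl, hanti, htrans⟩ := hP
  cases hv : P (x, y) with
  | true =>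
    rw [amalg_eq_true_iff]
    exact Or.inr (Or.inl ⟨hx, hy, hv⟩)
  | false =>
    rw [Bool.eq_false_iff]
    intro h
    rw [amalg_eq_true_iff] at h
    rcases h with h | ⟨_, _, hPxy⟩ | ⟨h1, h2, _⟩ | ⟨h1, h2, _, _⟩ | ⟨h1, h2, _, _⟩
    · subst h; exact absurd (hrefl x) (by simp [hv])
    · exact absurd hPxy (by simp [hv])
    · exact absurd h1 (hdisj x hx)
    · exact absurd h2 (hdisj y hy)
    · exact absurd h1 (hdisj x hx)

include hP hdisj in
lemma amalg_on_gD {x y : Γ} (hx : x ∈ D) (hy : y ∈ D) :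
    amalg P D a b γ (γ * x, γ * y) = P (x, y) := by
  obtain ⟨hrefl, hanti, htrans⟩ := hP
  cases hv : P (x, y) with
  | true =>
    rw [amalg_eq_true_iff]
    refine Or.inr (Or.inr (Or.inl ⟨by simpa using hx, by simpa using hy, by simpa using hv⟩))
  | false =>
    rw [Bool.eq_false_iff]
    intro h
    rw [amalg_eq_true_iff] at h
    rcases h with h | ⟨h1, h2, _⟩ | ⟨h1, h2, hPxy⟩ | ⟨h1, h2, _, _⟩ | ⟨h1, h2, _, _⟩
    · have hxy : x = y := mul_left_cancel h
      rw [hxy] at hv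
      exact absurd (hrefl y) (by simp [hv])
    · exact absurd (show γ⁻¹ * (γ * x) ∈ D by simpa using hx) (hdisj _ h1)
    · exact absurd (show P (x, y) = true by simpa using hPxy) (by simp [hv])
    · exact absurd (show γ⁻¹ * (γ * x) ∈ D by simpa using hx) (hdisj _ h1)
    · exact absurd (show γ⁻¹ * (γ * y) ∈ D by simpa using hy) (hdisj _ h2)

include hP ha hb in
lemma amalg_cross1 : amalg P D a b γ (b, γ * a) = true := by
  rw [amalg_eq_true_iff]
  exact Or.inr (Or.inr (Or.inr (Or.inl
    ⟨hb, by simpa using ha, hP.1 b, by simpa using hP.1 a⟩)))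

include hP ha hb in
lemma amalg_cross2 : amalg P D a b γ (γ * b, a) = true := by
  rw [amalg_eq_true_iff]
  exact Or.inr (Or.inr (Or.inr (Or.inr
    ⟨by simpa using hb, ha, by simpa using hP.1 b, hP.1 a⟩)))

end Amalg

lemma key {Γ : Type*} [Group Γ] [Countable Γ] [Infinite Γ]
    (X : Set (Γ × Γ → Bool)) (f : (Γ × Γ → Bool) → (Γ × Γ → Bool))
    (hXmeas : MeasurableSet X)
    (hfmeas : Measurable f)
    (hfequi : ∀ γ : Γ, ∀ R ∈ X, f (logicAct γ R) = logicAct γ (f R))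
    (hflin : ∀ R ∈ X, IsPartialOrderRel (f R) ∧
        (∀ x y : Γ, f R (x, y) = true ∨ f R (y, x) = true) ∧
        ∀ q : Γ × Γ, R q = true → f R q = true)
    (a b : Γ)
    (hnm : ¬ IsMeagre {P : {R : Γ × Γ → Bool // IsPartialOrderRel R} |
        P.1 ∈ X ∧ f P.1 (a, b) = true ∧ P.1 (a, b) = false}) :
    False := by
  classical
  haveI : CompactSpace {R : Γ × Γ → Bool // IsPartialOrderRel R} :=
    isCompact_iff_compactSpace.mp isClosed_po.isCompact
  haveI : BaireSpace {R : Γ × Γ → Bool // IsPartialOrderRel R} :=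
    BaireSpace.of_t2Space_locallyCompactSpace
  haveI : BorelSpace {R : Γ × Γ → Bool // IsPartialOrderRel R} :=
    Subtype.borelSpace {R : Γ × Γ → Bool | IsPartialOrderRel R}
  set S : Set {R : Γ × Γ → Bool // IsPartialOrderRel R} :=
    {P | P.1 ∈ X ∧ f P.1 (a, b) = true ∧ P.1 (a, b) = false} with hSdef
  have hSmeas : MeasurableSet S := by
    have h1 : MeasurableSet {P : {R : Γ × Γ → Bool // IsPartialOrderRel R} | P.1 ∈ X} :=
      measurable_subtype_coe hXmeas
    have hg : Measurable fun P : {R : Γ × Γ → Bool // IsPartialOrderRel R} => f P.1 (a, b) :=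
      (measurable_pi_apply (a, b)).comp (hfmeas.comp measurable_subtype_coe)
    have h2 : MeasurableSet
        {P : {R : Γ × Γ → Bool // IsPartialOrderRel R} | f P.1 (a, b) = true} :=
      hg (measurableSet_singleton true)
    have h3 : MeasurableSet
        {P : {R : Γ × Γ → Bool // IsPartialOrderRel R} | P.1 (a, b) = false} :=
      (((isClosed_eval (a, b) false).preimage continuous_subtype_val)).measurableSet
    exact h1.inter (h2.inter h3)
  obtain ⟨V, hVopen, hSV⟩ := hSmeas.baireMeasurableSet.residualEq_isOpen
  have hGmem : {P : {R : Γ × Γ → Bool // IsPartialOrderRel R} | P ∈ S ↔ P ∈ V} ∈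
      residual {R : Γ × Γ → Bool // IsPartialOrderRel R} := by
    filter_upwards [hSV] with P hP
    exact iff_of_eq hP
  have hGc : IsMeagre {P : {R : Γ × Γ → Bool // IsPartialOrderRel R} | P ∈ S ↔ P ∈ V}ᶜ := by
    rw [IsMeagre, compl_compl]
    exact hGmem
  have hSG : ∃ P₀, P₀ ∈ S ∧ (P₀ ∈ S ↔ P₀ ∈ V) := by
    by_contra h
    push_neg at h
    refine hnm (hGc.mono (s := {P : {R : Γ × Γ → Bool // IsPartialOrderRel R} | P ∈ S ↔ P ∈ V}ᶜ) fun P hP hPG => ?_)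
    rcases h P hP with ⟨_, hnv⟩ | ⟨hns, _⟩
    · exact hnv (hPG.mp hP)
    · exact hns hP
  obtain ⟨P₀, hP₀S, hP₀G⟩ := hSG
  have hP₀V : P₀ ∈ V := hP₀G.mp hP₀S
  obtain ⟨hP₀X, hP₀f, hP₀ab⟩ := hP₀S
  have haneb : a ≠ b := by
    intro h
    rw [h] at hP₀ab
    rw [P₀.2.1 b] at hP₀ab
    exact Bool.noConfusion hP₀ab
  obtain ⟨U, hUopen, hUV⟩ := isOpen_induced_iff.mp hVopen
  have hP₀U : P₀.1 ∈ U := by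
    rw [← hUV] at hP₀V
    exact hP₀V
  obtain ⟨I, u, hIu, hIsub⟩ := isOpen_pi_iff.mp hUopen P₀.1 hP₀U
  set D : Finset Γ := ({a, b} : Finset Γ) ∪ I.image Prod.fst ∪ I.image Prod.snd with hDdef
  have haD : a ∈ D := by simp [hDdef]
  have hbD : b ∈ D := by simp [hDdef]
  have hID : ∀ i ∈ I, i.1 ∈ D ∧ i.2 ∈ D := by
    intro i hi
    constructor
    · simp only [hDdef, Finset.mem_union, Finset.mem_image]
      exact Or.inl (Or.inr ⟨i, hi, rfl⟩)
    · simp only [hDdef, Finset.mem_union, Finset.mem_image]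
      exact Or.inr ⟨i, hi, rfl⟩
  obtain ⟨γ, hγ⟩ := Infinite.exists_notMem_finset
    ((D ×ˢ D).image fun p : Γ × Γ => p.1 * p.2⁻¹)
  have hdisj : ∀ x ∈ (D : Set Γ), γ⁻¹ * x ∉ (D : Set Γ) := by
    intro x hx hgx
    apply hγ
    simp only [Finset.mem_image, Finset.mem_product]
    refine ⟨(x, γ⁻¹ * x), ⟨by simpa using hx, by simpa using hgx⟩, ?_⟩
    group
  set R : Γ × Γ → Bool := amalg P₀.1 (↑D) a b γ with hRdef
  have hRpo : IsPartialOrderRel R :=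
    amalg_po P₀.2 (Finset.mem_coe.mpr haD) (Finset.mem_coe.mpr hbD) hP₀ab hdisj
  set E : Finset Γ := D ∪ D.image (fun x => γ * x) with hEdef
  set W : Set {R : Γ × Γ → Bool // IsPartialOrderRel R} :=
    {P | ∀ q : Γ × Γ, q.1 ∈ E → q.2 ∈ E → P.1 q = R q} with hWdef
  have hWopen : IsOpen W := by
    have : W = ⋂ q ∈ (E ×ˢ E : Finset (Γ × Γ)),
        {P : {R : Γ × Γ → Bool // IsPartialOrderRel R} | P.1 q = R q} := by
      ext P
      simp only [hWdef, mem_setOf_eq, mem_iInter, Finset.mem_product]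
      constructor
      · rintro h q ⟨h1, h2⟩
        exact h q h1 h2
      · intro h q h1 h2
        exact h q ⟨h1, h2⟩
    rw [this]
    exact isOpen_biInter_finset fun q _ =>
      (isOpen_eval q (R q)).preimage continuous_subtype_val
  have hWne : W.Nonempty := ⟨⟨R, hRpo⟩, fun q _ _ => rfl⟩
  have hDE : ∀ x ∈ D, x ∈ E := by
    intro x hx
    simp [hEdef, hx]
  have hgDE : ∀ x ∈ D, γ * x ∈ E := by
    intro x hx
    simp only [hEdef, Finset.mem_union, Finset.mem_image]
    exact Or.inr ⟨x, hx, rfl⟩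
  have hWV : W ⊆ V := by
    intro P hP
    rw [← hUV]
    show P.1 ∈ U
    apply hIsub
    rw [Set.mem_pi]
    intro i hi
    have hiI : i ∈ I := hi
    obtain ⟨hi1, hi2⟩ := hID i hiI
    have h1 : P.1 i = R i := hP i (hDE _ hi1) (hDE _ hi2)
    have h2 : R i = P₀.1 i := by
      rw [hRdef]
      exact amalg_on_D P₀.2 hdisj (Finset.mem_coe.mpr hi1) (Finset.mem_coe.mpr hi2)
    rw [h1, h2]
    exact (hIu i hiI).2
  set T : Set {R : Γ × Γ → Bool // IsPartialOrderRel R} :=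
    {P | P.1 ∈ X ∧ f P.1 (a, b) = true} with hTdef
  have hVT : IsMeagre (V \ T) := by
    apply hGc.mono
    rintro P ⟨hPV, hPT⟩ hPG
    exact hPT ⟨(hPG.mpr hPV).1, (hPG.mpr hPV).2.1⟩
  let e : {R : Γ × Γ → Bool // IsPartialOrderRel R} ≃ₜ
      {R : Γ × Γ → Bool // IsPartialOrderRel R} :=
    { toFun := fun P => ⟨logicAct γ⁻¹ P.1, P.2.logicAct γ⁻¹⟩
      invFun := fun P => ⟨logicAct γ P.1, P.2.logicAct γ⟩
      left_inv := fun P => Subtype.ext (logicAct_inv_cancel γ P.1)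
      right_inv := fun P => Subtype.ext (logicAct_cancel_inv γ P.1)
      continuous_toFun :=
        Continuous.subtype_mk ((continuous_logicAct γ⁻¹).comp continuous_subtype_val) _
      continuous_invFun :=
        Continuous.subtype_mk ((continuous_logicAct γ).comp continuous_subtype_val) _ }
  have hWactV : ∀ P ∈ W, e P ∈ V := by
    intro P hP
    rw [← hUV]
    show logicAct γ⁻¹ P.1 ∈ U
    apply hIsub
    rw [Set.mem_pi]
    intro i hi
    have hiI : i ∈ I := hi
    obtain ⟨hi1, hi2⟩ := hID i hiI
    have h1 : logicAct γ⁻¹ P.1 i = P.1 (γ * i.1, γ * i.2) := by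
      simp [logicAct]
    have h2 : P.1 (γ * i.1, γ * i.2) = R (γ * i.1, γ * i.2) :=
      hP (γ * i.1, γ * i.2) (hgDE _ hi1) (hgDE _ hi2)
    have h3 : R (γ * i.1, γ * i.2) = P₀.1 i := by
      rw [hRdef]
      exact amalg_on_gD P₀.2 hdisj (Finset.mem_coe.mpr hi1) (Finset.mem_coe.mpr hi2)
    rw [h1, h2, h3]
    exact (hIu i hiI).2
  have hM : IsMeagre ((V \ T) ∪ ⇑e ⁻¹' (V \ T)) :=
    hVT.union' (hVT.preimage_of_isOpenMap e.continuous e.isOpenMap)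
  obtain ⟨Pstar, hPW, hPM⟩ := exists_open_not_meagre hWopen hWne hM
  have hPT : Pstar ∈ T := by
    by_contra h
    exact hPM (Or.inl ⟨hWV hPW, h⟩)
  have hQT : e Pstar ∈ T := by
    by_contra h
    exact hPM (Or.inr ⟨hWactV Pstar hPW, h⟩)
  obtain ⟨hPX, hPf⟩ := hPT
  obtain ⟨hQX, hQf⟩ := hQT
  have hback : logicAct γ ((e Pstar).1) = Pstar.1 := logicAct_inv_cancel γ Pstar.1
  have hgab : f Pstar.1 (γ * a, γ * b) = true := by
    have heq := hfequi γ (e Pstar).1 hQX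
    rw [hback] at heq
    rw [heq]
    show f ((e Pstar).1) (γ⁻¹ * (γ * a), γ⁻¹ * (γ * b)) = true
    simpa using hQf
  have hc1 : Pstar.1 (b, γ * a) = true := by
    have h := hPW (b, γ * a) (hDE b hbD) (hgDE a haD)
    rw [h, hRdef]
    exact amalg_cross1 P₀.2 (Finset.mem_coe.mpr haD) (Finset.mem_coe.mpr hbD)
  have hc2 : Pstar.1 (γ * b, a) = true := by
    have h := hPW (γ * b, a) (hgDE b hbD) (hDE a haD)
    rw [h, hRdef]
    exact amalg_cross2 P₀.2 (Finset.mem_coe.mpr haD) (Finset.mem_coe.mpr hbD)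
  obtain ⟨⟨-, hanti, htrans⟩, -, hext⟩ := hflin Pstar.1 hPX
  have e1 : f Pstar.1 (b, γ * a) = true := hext _ hc1
  have e2 : f Pstar.1 (γ * b, a) = true := hext _ hc2
  have t1 : f Pstar.1 (b, γ * b) = true := htrans b (γ * a) (γ * b) e1 hgab
  have t2 : f Pstar.1 (b, a) = true := htrans b (γ * b) a t1 e2
  exact haneb (hanti a b hPf t2)

/-- There is no Γ-invariant Borel set `X ⊆ PO(Γ)` comeagre in `PO(Γ)`
admitting a Borel Γ-equivariant map assigning to each partial order in `X` a linear
order on `Γ` extending it. -/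
theorem stmt_7 {Γ : Type*} [Group Γ] [Countable Γ] [Infinite Γ] :
    ¬ ∃ (X : Set (Γ × Γ → Bool)) (f : (Γ × Γ → Bool) → (Γ × Γ → Bool)),
      X ⊆ {R | IsPartialOrderRel R} ∧ MeasurableSet X ∧
      (∀ γ : Γ, ∀ R ∈ X, logicAct γ R ∈ X) ∧
      IsMeagre {R : {R : Γ × Γ → Bool // IsPartialOrderRel R} |
        (R : Γ × Γ → Bool) ∉ X} ∧
      Measurable f ∧
      (∀ γ : Γ, ∀ R ∈ X, f (logicAct γ R) = logicAct γ (f R)) ∧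
      ∀ R ∈ X, IsPartialOrderRel (f R) ∧
        (∀ x y : Γ, f R (x, y) = true ∨ f R (y, x) = true) ∧
        ∀ q : Γ × Γ, R q = true → f R q = true := by
  classical
  rintro ⟨X, f, hXsub, hXmeas, hXinv, hmeag, hfmeas, hfequi, hflin⟩
  obtain ⟨a, b, hab⟩ := exists_pair_ne Γ
  haveI : CompactSpace {R : Γ × Γ → Bool // IsPartialOrderRel R} :=
    isCompact_iff_compactSpace.mp isClosed_po.isCompact
  haveI : BaireSpace {R : Γ × Γ → Bool // IsPartialOrderRel R} :=
    BaireSpace.of_t2Space_locallyCompactSpace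
  have heqpo : IsPartialOrderRel (fun q : Γ × Γ => decide (q.1 = q.2)) := by
    refine ⟨fun x => by simp, fun x y h1 h2 => by simpa using h1, fun x y z h1 h2 => ?_⟩
    simp only [decide_eq_true_eq] at h1 h2 ⊢
    exact h1.trans h2
  set U₀ : Set {R : Γ × Γ → Bool // IsPartialOrderRel R} :=
    {P | P.1 (a, b) = false ∧ P.1 (b, a) = false} with hU₀def
  have hU₀open : IsOpen U₀ :=
    ((isOpen_eval (a, b) false).preimage continuous_subtype_val).inter
      ((isOpen_eval (b, a) false).preimage continuous_subtype_val)
  have hU₀ne : U₀.Nonempty := by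
    refine ⟨⟨fun q : Γ × Γ => decide (q.1 = q.2), heqpo⟩, ?_⟩
    constructor
    · simpa using hab
    · simpa using Ne.symm hab
  have hsplit : ¬ IsMeagre {P : {R : Γ × Γ → Bool // IsPartialOrderRel R} |
        P.1 ∈ X ∧ f P.1 (a, b) = true ∧ P.1 (a, b) = false}
      ∨ ¬ IsMeagre {P : {R : Γ × Γ → Bool // IsPartialOrderRel R} |
        P.1 ∈ X ∧ f P.1 (b, a) = true ∧ P.1 (b, a) = false} := by
    by_contra h
    push_neg at h
    obtain ⟨h1, h2⟩ := h
    have hU₀m : IsMeagre U₀ := by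
      apply ((h1.union' h2).union' hmeag).mono
      intro P hP
      by_cases hPX : P.1 ∈ X
      · obtain ⟨-, hlin, -⟩ := hflin P.1 hPX
        rcases hlin a b with hl | hl
        · exact Or.inl (Or.inl ⟨hPX, hl, hP.1⟩)
        · exact Or.inl (Or.inr ⟨hPX, hl, hP.2⟩)
      · exact Or.inr hPX
    exact not_isMeagre_of_isOpen' hU₀open hU₀ne hU₀m
  rcases hsplit with h | h
  · exact key X f hXmeas hfmeas hfequi hflin a b h
  · exact key X f hXmeas hfmeas hfequi hflin b a h
end
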